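/- arXiv:1402.6807 — 5 statements merged into one kernel-verified Lean document; each statement's English description precedes it below -/
import Mathlib

section
/- Let p be prime and L ∈ M_{p×p}(F_p). Then L is a difference matrix (for all i ≠ j, k ↦ L_{i,k} − L_{j,k} is bijective on F_p) if and only if for all indices with 0 ≤ a < i ≤ p−1 and 0 ≤ b < j ≤ p−1, one has L_{i,j} ≠ L_{i,b} + L_{a,j} − L_{a,b}. -/
/-- `L` is a difference matrix iff `L i j ≠ L i b + L a j - L a b` whenever `a < i`, `b < j`. -/
theorem stmt_3 (p : ℕ) (hp : p.Prime) (L : Matrix (Fin p) (Fin p) (ZMod p)) :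
    (∀ i j : Fin p, i ≠ j → Function.Bijective fun k => L i k - L j k) ↔
      ∀ i j a b : Fin p, a < i → b < j → L i j ≠ L i b + L a j - L a b := by
  haveI : NeZero p := ⟨hp.ne_zero⟩
  constructor
  · intro h i j a b ha hb heq
    have hinj := (h i a ha.ne').injective
    have : j = b := hinj (by simpa using (by linear_combination heq : L i j - L a j = L i b - L a b))
    exact hb.ne' this
  · intro h i j hij
    have hinj : Function.Injective (fun k => L i k - L j k) := by
      intro k k' he
      simp only at he
      by_contra hk
      rcases lt_or_gt_of_ne hij with hij' | hij' <;>
        rcases lt_or_gt_of_ne hk with hk' | hk'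
      · exact h j k' i k hij' hk' (by linear_combination he)
      · exact h j k i k' hij' hk' (by linear_combination -he)
      · exact h i k' j k hij' hk' (by linear_combination -he)
      · exact h i k j k' hij' hk' (by linear_combination he)
    exact (Fintype.bijective_iff_injective_and_card _).mpr ⟨hinj, by simp⟩
end

section
/- Let H = (ξ_p^{E_{i,j}}) be a fully normalized Butson–Hadamard matrix of type (p,p), let C be the p×p cyclic permutation matrix corresponding to α ↦ α+1 on F_p, and P(H) the p²×p² block matrix (C^{E_{i,j}}). Then the (p²+p+1)×(p²+p+1) matrix Q(H) with block structure [[1, J_{1,p}, O], [J_{p,1}, O, D], [O, Dᵀ, P(H)]] (where D is the p×p² block-diagonal matrix of all-ones row vectors) is the incidence matrix of a projective plane of order p; i.e., Q(H)Q(H)ᵀ = pI + J. -/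
open Polynomial Finset

-- key counting lemma
lemma count_fiber_eq_one {p : ℕ} [NeZero p] (hp : p.Prime) (g : ZMod p → ZMod p)
    (h0 : ∑ e : ZMod p, Complex.exp (2 * Real.pi * Complex.I / p) ^ (g e).val = 0)
    (t : ZMod p) : ({e : ZMod p | g e = t} : Finset (ZMod p)).card = 1 := by
  haveI : Fact p.Prime := ⟨hp⟩
  set ζ := Complex.exp (2 * Real.pi * Complex.I / p) with hζdef
  have hζ : IsPrimitiveRoot ζ p := Complex.isPrimitiveRoot_exp p hp.ne_zero
  set cnt : ZMod p → ℕ := fun s => ({e : ZMod p | g e = s} : Finset (ZMod p)).card with hcnt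
  -- sum over fibers
  have h1 : ∑ s : ZMod p, (cnt s : ℂ) * ζ ^ s.val = 0 := by
    rw [← h0, ← Finset.sum_fiberwise' Finset.univ g (fun s => ζ ^ s.val)]
    refine Finset.sum_congr rfl fun s _ => ?_
    rw [Finset.sum_const, nsmul_eq_mul]
  have hsum : ∑ s : ZMod p, cnt s = p := by
    have := Finset.sum_fiberwise' Finset.univ g (fun _ : ZMod p => (1 : ℕ))
    simpa [Finset.card_univ, ZMod.card] using this
  -- polynomial
  set P : Polynomial ℚ := ∑ s : ZMod p, Polynomial.C (cnt s : ℚ) * Polynomial.X ^ s.val with hP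
  have hcoeff : ∀ s : ZMod p, P.coeff s.val = (cnt s : ℚ) := by
    intro s
    rw [hP, Polynomial.finset_sum_coeff]
    rw [Finset.sum_eq_single s]
    · simp
    · intro b _ hb
      rw [Polynomial.coeff_C_mul, Polynomial.coeff_X_pow, if_neg, mul_zero]
      exact fun h => hb (ZMod.val_injective p h.symm)
    · simp
  have haeval : Polynomial.aeval ζ P = 0 := by
    rw [hP]
    simpa using h1
  have hdeg : P.natDegree ≤ p - 1 := by
    refine Polynomial.natDegree_sum_le_of_forall_le _ _ fun s _ => ?_
    refine le_trans (Polynomial.natDegree_C_mul_le _ _) ?_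
    simpa using Nat.le_sub_one_of_lt (ZMod.val_lt s)
  have hPne : P ≠ 0 := by
    intro h
    have : (cnt (g 0) : ℚ) = 0 := by rw [← hcoeff, h, Polynomial.coeff_zero]
    have : cnt (g 0) = 0 := by exact_mod_cast this
    rw [hcnt] at this
    simp only [Finset.card_eq_zero, Finset.filter_eq_empty_iff] at this
    exact (this (Finset.mem_univ (0 : ZMod p))) rfl
  have hmin : minpoly ℚ ζ ∣ P := minpoly.dvd ℚ ζ haeval
  rw [← Polynomial.cyclotomic_eq_minpoly_rat hζ hp.pos] at hmin
  obtain ⟨q, hq⟩ := hmin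
  have hcyc : Polynomial.cyclotomic p ℚ = ∑ i ∈ Finset.range p, Polynomial.X ^ i :=
    Polynomial.cyclotomic_prime ℚ p
  have hdegc : (Polynomial.cyclotomic p ℚ).natDegree = p - 1 := by
    rw [Polynomial.natDegree_cyclotomic, Nat.totient_prime hp]
  have hqne : q ≠ 0 := by rintro rfl; simp [hq] at hPne
  have hcycne : Polynomial.cyclotomic p ℚ ≠ 0 := Polynomial.cyclotomic_ne_zero p ℚ
  have hqdeg : q.natDegree = 0 := by
    have := Polynomial.natDegree_mul hcycne hqne
    rw [← hq, hdegc] at this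
    omega
  obtain ⟨k, hk⟩ := Polynomial.natDegree_eq_zero.mp hqdeg
  -- coefficients of cyclotomic * C k
  have hcval : ∀ s : ZMod p, (cnt s : ℚ) = k := by
    intro s
    rw [← hcoeff, hq, ← hk, Polynomial.coeff_mul_C, hcyc, Polynomial.finset_sum_coeff]
    rw [Finset.sum_eq_single s.val]
    · simp
    · intro b _ hb; simp [Polynomial.coeff_X_pow, (Ne.symm hb)]
    · intro h; exact absurd (Finset.mem_range.mpr (ZMod.val_lt s)) h
  have hk1 : k = 1 := by
    have : (p : ℚ) = p * k := by
      calc (p : ℚ) = ∑ s : ZMod p, (cnt s : ℚ) := by rw [← Nat.cast_sum, hsum]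
      _ = ∑ _s : ZMod p, k := Finset.sum_congr rfl fun s _ => hcval s
      _ = p * k := by simp [Finset.card_univ, ZMod.card, mul_comm]
    have hpne : (p : ℚ) ≠ 0 := by exact_mod_cast hp.ne_zero
    field_simp at this
    linarith [this]
  have := hcval t
  rw [hk1] at this
  exact_mod_cast this

lemma conj_zeta_pow {p : ℕ} [NeZero p] (n : ℕ) :
    (starRingEnd ℂ) (Complex.exp (2 * Real.pi * Complex.I / p) ^ n)
      = (Complex.exp (2 * Real.pi * Complex.I / p) ^ n)⁻¹ := by
  rw [map_pow, ← inv_pow]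
  congr 1
  rw [← Complex.exp_conj, ← Complex.exp_neg]
  congr 1
  have : (starRingEnd ℂ) (2 * (Real.pi : ℂ) * Complex.I / p)
      = 2 * (Real.pi : ℂ) * (-Complex.I) / p := by
    simp [map_div₀, map_mul, Complex.conj_I, Complex.conj_ofReal, map_ofNat]
  rw [this]
  push_cast
  ring

lemma zeta_val_sub {p : ℕ} [NeZero p] (hp : p.Prime) (x y : ZMod p) :
    Complex.exp (2 * Real.pi * Complex.I / p) ^ x.val *
      (star (Complex.exp (2 * Real.pi * Complex.I / p) ^ y.val))
      = Complex.exp (2 * Real.pi * Complex.I / p) ^ (x - y).val := by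
  set ζ := Complex.exp (2 * Real.pi * Complex.I / p) with hζdef
  have hζ : IsPrimitiveRoot ζ p := Complex.isPrimitiveRoot_exp p hp.ne_zero
  have hone : ζ ^ p = 1 := hζ.pow_eq_one
  have hne : ζ ^ y.val ≠ 0 := pow_ne_zero _ (Complex.exp_ne_zero _)
  rw [show (star (ζ ^ y.val) : ℂ) = (starRingEnd ℂ) (ζ ^ y.val) from rfl,
    conj_zeta_pow, mul_inv_eq_iff_eq_mul₀ hne, ← pow_add,
    pow_eq_pow_mod ((x - y).val + y.val) hone, ← ZMod.val_add, sub_add_cancel]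




/-- The incidence matrix `Q(H)` built from a fully normalized Butson–Hadamard matrix
`H = (ξ_p^{E i j})`. Rows/columns indexed by `Unit ⊕ ZMod p ⊕ ZMod p × ZMod p`. -/
def Qmat (p : ℕ) (E : Matrix (ZMod p) (ZMod p) (ZMod p)) :
    Matrix (Unit ⊕ ZMod p ⊕ ZMod p × ZMod p) (Unit ⊕ ZMod p ⊕ ZMod p × ZMod p) ℤ :=
  fun r c =>
    match r, c with
    | Sum.inl _, Sum.inl _ => 1
    | Sum.inl _, Sum.inr (Sum.inl _) => 1
    | Sum.inl _, Sum.inr (Sum.inr _) => 0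
    | Sum.inr (Sum.inl _), Sum.inl _ => 1
    | Sum.inr (Sum.inl _), Sum.inr (Sum.inl _) => 0
    | Sum.inr (Sum.inl i), Sum.inr (Sum.inr (a, _)) => if a = i then 1 else 0
    | Sum.inr (Sum.inr _), Sum.inl _ => 0
    | Sum.inr (Sum.inr (a, _)), Sum.inr (Sum.inl j) => if a = j then 1 else 0
    | Sum.inr (Sum.inr (a, b)), Sum.inr (Sum.inr (c, d)) =>
        if d = b + E a c then 1 else 0

/-- `Q(H) Q(H)ᵀ = p I + J`, so `Q(H)` is the incidence matrix of a projective plane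
of order `p` (each row also sums to `p + 1`). -/
theorem stmt_10 (p : ℕ) (hp : p.Prime) [NeZero p]
    (E : Matrix (ZMod p) (ZMod p) (ZMod p))
    (H : Matrix (ZMod p) (ZMod p) ℂ)
    (hH : ∀ i j, H i j = Complex.exp (2 * Real.pi * Complex.I / p) ^ (E i j).val)
    (hBH : H * H.conjTranspose = (p : ℂ) • 1)
    (hnorm : ∀ i : ZMod p, E 0 i = 0 ∧ E i 0 = 0 ∧ E 1 i = i ∧ E i 1 = i) :
    Qmat p E * (Qmat p E).transpose = (p : ℤ) • 1 + Matrix.of (fun _ _ => 1) ∧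
    ∀ r, ∑ c, Qmat p E r c = p + 1 := by
  have key : ∀ a c : ZMod p, a ≠ c → ∀ t : ZMod p,
      ({e : ZMod p | E a e - E c e = t} : Finset (ZMod p)).card = 1 := by
    intro a c hac t
    apply count_fiber_eq_one hp
    have h := congrFun (congrFun hBH a) c
    rw [Matrix.mul_apply] at h
    simp only [Matrix.smul_apply, Matrix.one_apply_ne hac, smul_zero] at h
    calc ∑ e : ZMod p, Complex.exp (2 * Real.pi * Complex.I / p) ^ (E a e - E c e).val
        = ∑ e : ZMod p, H a e * H.conjTranspose e c := by
          refine Finset.sum_congr rfl fun e _ => ?_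
          rw [Matrix.conjTranspose_apply, hH, hH, zeta_val_sub hp]
      _ = 0 := h
  constructor
  · ext r c
    rcases r with _ | i | ⟨a, b⟩ <;> rcases c with _ | j | ⟨c, d⟩ <;>
      simp only [Matrix.mul_apply, Matrix.transpose_apply, Matrix.add_apply,
        Matrix.smul_apply, Matrix.one_apply, Matrix.of_apply, Fintype.sum_sum_type,
        Fintype.sum_prod_type, Qmat, smul_eq_mul]
    all_goals simp [Finset.sum_ite_eq', Finset.sum_ite_eq, Finset.card_univ, ZMod.card,
      mul_comm, Finset.mul_sum]
    · ring
    · rcases eq_or_ne i j with rfl | hij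
      · simp
        ring
      · simp [hij, Ne.symm hij]
    · rcases eq_or_ne a c with rfl | hac
      · rcases eq_or_ne b d with rfl | hbd
        · simp [Finset.card_univ, ZMod.card]
          ring
        · have h1 : Finset.univ.filter (fun x : ZMod p => d + E a x = b + E a x) = ∅ := by
            apply Finset.filter_false_of_mem
            intro x _ h
            exact hbd (by linear_combination -h)
          simp [h1, Ne.symm hbd, hbd]
      · have h1 : Finset.univ.filter (fun x : ZMod p => d + E c x = b + E a x)
            = Finset.univ.filter (fun e : ZMod p => E a e - E c e = d - b) := by
          apply Finset.filter_congr
          intro x _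
          constructor <;> intro h <;> linear_combination -h
        rw [h1, key a c hac]
        simp [hac]
  · intro r
    rcases r with _ | i | ⟨a, b⟩ <;>
      simp only [Fintype.sum_sum_type, Fintype.sum_prod_type, Qmat] <;>
      simp [Finset.sum_ite_eq', Finset.sum_ite_eq, Finset.card_univ, ZMod.card,
        apply_ite Finset.card, apply_ite (Nat.cast : ℕ → ℤ)] <;>
      ring
end

section
/- The map Ψ sending a quadruple (D, σ, y, z) — a projective plane D of order p, an elation σ of order p with respect to a flag (x, L₀), and points y, z off L₀ with x, y, z not collinear — to the fully normalized Butson–Hadamard matrix (ξ_p^{E_{i,j}}) defined by σ^{E_{i,j}}(y_i) ∈ N_j, is surjective onto the set of fully normalized Butson–Hadamard matrices of type (p,p). -/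
set_option linter.unusedSectionVars false
namespace Stmt12Aux

variable (p : ℕ)

abbrev Pt (p : ℕ) := (ZMod p × ZMod p) ⊕ (Option (ZMod p))

/-- the line at infinity -/
def L0 : Set (Pt p) := fun q => q.elim (fun _ => False) (fun _ => True)

/-- vertical lines (through the center `x = inr none`) -/
def V (a : ZMod p) : Set (Pt p) := fun q => q.elim (fun z => z.1 = a) (fun o => o = none)

/-- the oblique lines -/
def M (E : Matrix (ZMod p) (ZMod p) (ZMod p)) (j t : ZMod p) : Set (Pt p) :=
  fun q => q.elim (fun z => z.2 = E z.1 j + t) (fun o => o = some j)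

@[simp] lemma inl_mem_L0 (z : ZMod p × ZMod p) : Sum.inl z ∈ L0 p ↔ False := Iff.rfl
@[simp] lemma inr_mem_L0 (o : Option (ZMod p)) : Sum.inr o ∈ L0 p ↔ True := Iff.rfl
@[simp] lemma inl_mem_V (a : ZMod p) (z : ZMod p × ZMod p) : Sum.inl z ∈ V p a ↔ z.1 = a := Iff.rfl
@[simp] lemma inr_mem_V (a : ZMod p) (o : Option (ZMod p)) : Sum.inr o ∈ V p a ↔ o = none := Iff.rfl
@[simp] lemma inl_mem_M (E : Matrix (ZMod p) (ZMod p) (ZMod p)) (j t : ZMod p)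
    (z : ZMod p × ZMod p) : Sum.inl z ∈ M p E j t ↔ z.2 = E z.1 j + t := Iff.rfl
@[simp] lemma inr_mem_M (E : Matrix (ZMod p) (ZMod p) (ZMod p)) (j t : ZMod p)
    (o : Option (ZMod p)) : Sum.inr o ∈ M p E j t ↔ o = some j := Iff.rfl

/-- the elation -/
def sig : Equiv.Perm (Pt p) :=
  Equiv.sumCongr ((Equiv.refl (ZMod p)).prodCongr (Equiv.addRight (1 : ZMod p)))
    (Equiv.refl (Option (ZMod p)))

@[simp] lemma sig_inl (a k : ZMod p) : sig p (Sum.inl (a, k)) = Sum.inl (a, k + 1) := rfl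
@[simp] lemma sig_inr (o : Option (ZMod p)) : sig p (Sum.inr o) = Sum.inr o := rfl
@[simp] lemma sig_symm_inl (a k : ZMod p) : (sig p).symm (Sum.inl (a, k)) = Sum.inl (a, k - 1) := by
  rw [Equiv.symm_apply_eq, sig_inl, sub_add_cancel]
@[simp] lemma sig_symm_inr (o : Option (ZMod p)) : (sig p).symm (Sum.inr o) = Sum.inr o := rfl

@[simp] lemma sig_pow_inl (n : ℕ) (a k : ZMod p) :
    ((sig p) ^ n) (Sum.inl (a, k)) = Sum.inl (a, k + (n : ZMod p)) := by
  induction n with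
  | zero => simp
  | succ m ih =>
      rw [pow_succ', Equiv.Perm.mul_apply, ih, sig_inl]
      push_cast; ring_nf

@[simp] lemma sig_pow_inr (n : ℕ) (o : Option (ZMod p)) :
    ((sig p) ^ n) (Sum.inr o) = Sum.inr o := by
  induction n with
  | zero => simp
  | succ m ih => rw [pow_succ', Equiv.Perm.mul_apply, ih, sig_inr]

variable [Fact p.Prime]

noncomputable def Lines (E : Matrix (ZMod p) (ZMod p) (ZMod p)) : Finset (Set (Pt p)) :=
  letI := Classical.decEq (Set (Pt p))
  ({L0 p} : Finset (Set (Pt p))) ∪ Finset.univ.image (V p) ∪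
    Finset.univ.image (fun jt : ZMod p × ZMod p => M p E jt.1 jt.2)

lemma mem_Lines {E : Matrix (ZMod p) (ZMod p) (ZMod p)} {l : Set (Pt p)} :
    l ∈ Lines p E ↔ l = L0 p ∨ (∃ a, l = V p a) ∨ ∃ j t, l = M p E j t := by
  classical
  simp only [Lines, Finset.mem_union, Finset.mem_image, Finset.mem_singleton, Finset.mem_univ,
    true_and]
  constructor
  · rintro ((h | ⟨a, ha⟩) | ⟨⟨j, t⟩, h⟩)
    · exact Or.inl h
    · exact Or.inr (Or.inl ⟨a, ha.symm⟩)
    · exact Or.inr (Or.inr ⟨j, t, h.symm⟩)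
  · rintro (h | ⟨a, ha⟩ | ⟨j, t, h⟩)
    · exact Or.inl (Or.inl h)
    · exact Or.inl (Or.inr ⟨a, ha.symm⟩)
    · exact Or.inr ⟨⟨j, t⟩, h.symm⟩

lemma V_ne_L0 (a : ZMod p) : V p a ≠ L0 p := by
  intro h
  have : Sum.inr (some a) ∈ V p a := by rw [h]; simp
  simp at this

lemma M_ne_L0 (E : Matrix (ZMod p) (ZMod p) (ZMod p)) (j t : ZMod p) : M p E j t ≠ L0 p := by
  intro h
  have : Sum.inr none ∈ M p E j t := by rw [h]; simp
  simp at this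

lemma M_ne_V (E : Matrix (ZMod p) (ZMod p) (ZMod p)) (j t a : ZMod p) : M p E j t ≠ V p a := by
  intro h
  have : Sum.inr (some j) ∈ V p a := by rw [← h]; simp
  simp at this

lemma V_injective : Function.Injective (V p) := by
  intro a b h
  have : Sum.inl (a, (0 : ZMod p)) ∈ V p b := by rw [← h]; simp
  simpa using this

lemma M_injective (E : Matrix (ZMod p) (ZMod p) (ZMod p)) (hE0 : ∀ i, E 0 i = 0) :
    Function.Injective (fun jt : ZMod p × ZMod p => M p E jt.1 jt.2) := by
  rintro ⟨j, t⟩ ⟨j', t'⟩ h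
  simp only at h
  have hj : j = j' := by
    have : Sum.inr (some j) ∈ M p E j' t' := by rw [← h]; simp
    simpa using this
  have ht : t = t' := by
    have : Sum.inl ((0 : ZMod p), t) ∈ M p E j' t' := by
      rw [← h]; simp [hE0]
    simp only [inl_mem_M, hE0, zero_add] at this
    exact this
  rw [hj, ht]

lemma card_Lines (E : Matrix (ZMod p) (ZMod p) (ZMod p)) (hE0 : ∀ i, E 0 i = 0) :
    (Lines p E).card = p ^ 2 + p + 1 := by
  classical
  have h1 : (({L0 p} : Finset (Set (Pt p))) ∪ Finset.univ.image (V p)).card = 1 + p := by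
    rw [Finset.card_union_of_disjoint]
    · rw [Finset.card_singleton, Finset.card_image_of_injective _ (V_injective p)]
      simp [Finset.card_univ]
    · simp only [Finset.disjoint_left, Finset.mem_singleton, Finset.mem_image]
      rintro l rfl ⟨a, -, ha⟩
      exact V_ne_L0 p a ha
  have h2 : (Lines p E).card = (1 + p) + p ^ 2 := by
    rw [Lines, Finset.card_union_of_disjoint]
    · erw [h1, Finset.card_image_of_injective _ (M_injective p E hE0)]
      simp [Finset.card_univ, sq]
    · simp only [Finset.disjoint_left, Finset.mem_union, Finset.mem_singleton, Finset.mem_image]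
      rintro l (rfl | ⟨a, -, rfl⟩) ⟨⟨j, t⟩, -, h⟩
      · exact M_ne_L0 p E j t h
      · exact M_ne_V p E j t a h
  omega

end Stmt12Aux

namespace More
variable (p : ℕ) [Fact p.Prime] (E : Matrix (ZMod p) (ZMod p) (ZMod p))
open Stmt12Aux

lemma ncard_L0 : (L0 p).ncard = p + 1 := by
  have : L0 p = (Sum.inr : Option (ZMod p) → Pt p) '' Set.univ := by
    ext q; cases q <;> simp
  rw [this, Set.ncard_image_of_injective _ Sum.inr_injective, Set.ncard_univ]
  simp [Nat.card_eq_fintype_card, ZMod.card]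

lemma ncard_V (a : ZMod p) : (V p a).ncard = p + 1 := by
  have : V p a = (fun k => (Sum.inl (a, k) : Pt p)) '' Set.univ ∪ {Sum.inr none} := by
    ext q; cases q with
    | inl z => simp [eq_comm, Prod.ext_iff]
    | inr o => simp
  rw [this, Set.ncard_union_eq ?_ (Set.toFinite _) (Set.toFinite _)]
  · rw [Set.ncard_image_of_injective _ (fun k k' h => by simpa [Prod.ext_iff] using h),
      Set.ncard_univ, Nat.card_zmod, Set.ncard_singleton]
  · simp [Set.disjoint_left]

lemma ncard_M (j t : ZMod p) : (M p E j t).ncard = p + 1 := by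
  have : M p E j t = (fun i => (Sum.inl (i, E i j + t) : Pt p)) '' Set.univ ∪
      {Sum.inr (some j)} := by
    ext q; cases q with
    | inl z =>
        obtain ⟨z1, z2⟩ := z
        simp only [inl_mem_M, Set.mem_union, Set.mem_image, Set.mem_univ, true_and,
          Set.mem_singleton_iff]
        constructor
        · intro h; exact Or.inl ⟨z1, by rw [h]⟩
        · rintro (⟨i, hi⟩ | h)
          · obtain ⟨rfl, rfl⟩ : i = z1 ∧ E i j + t = z2 := by
              simpa [Prod.ext_iff] using hi
            rfl
          · simp at h
    | inr o => simp
  rw [this, Set.ncard_union_eq ?_ (Set.toFinite _) (Set.toFinite _)]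
  · rw [Set.ncard_image_of_injective _
        (fun k k' h => congrArg Prod.fst (Sum.inl_injective h)),
      Set.ncard_univ, Nat.card_zmod, Set.ncard_singleton]
  · simp [Set.disjoint_left]

lemma hcol (hdiff : ∀ i j : ZMod p, i ≠ j → Function.Bijective fun k => E i k - E j k)
    {j j' : ZMod p} (h : j ≠ j') : Function.Bijective fun i => E i j - E i j' := by
  rw [← Finite.injective_iff_bijective]
  intro i i' hii
  by_contra hne
  have := (hdiff i i' hne).injective
  simp only at hii
  have h2 : E i j - E i' j = E i j' - E i' j' := by
    have := sub_eq_sub_iff_sub_eq_sub.mp hii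
    linear_combination hii
  exact h (this h2)

lemma inter_L0_V (a : ZMod p) : L0 p ∩ V p a = {Sum.inr none} := by
  ext q; cases q <;> simp

lemma inter_L0_M (j t : ZMod p) : L0 p ∩ M p E j t = {Sum.inr (some j)} := by
  ext q; cases q <;> simp

lemma inter_V_V {a a' : ZMod p} (h : a ≠ a') : V p a ∩ V p a' = {Sum.inr none} := by
  ext q; cases q with
  | inl z =>
      simp only [Set.mem_inter_iff, inl_mem_V, Set.mem_singleton_iff]
      constructor
      · rintro ⟨rfl, rfl⟩; exact absurd rfl h
      · intro hq; simp at hq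
  | inr o => simp

lemma inter_V_M (a j t : ZMod p) : V p a ∩ M p E j t = {Sum.inl (a, E a j + t)} := by
  ext q; cases q with
  | inl z =>
      simp only [Set.mem_inter_iff, inl_mem_V, inl_mem_M, Set.mem_singleton_iff]
      constructor
      · rintro ⟨rfl, h2⟩; exact congrArg Sum.inl (Prod.ext rfl h2)
      · intro hq
        obtain ⟨h1, h2⟩ : z.1 = a ∧ z.2 = E a j + t := by
          simpa [Prod.ext_iff] using hq
        exact ⟨h1, by rw [h2, h1]⟩
  | inr o =>
      simp only [Set.mem_inter_iff, inr_mem_V, inr_mem_M, Set.mem_singleton_iff]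
      constructor
      · rintro ⟨rfl, h⟩; simp at h
      · intro h; simp at h

lemma inter_M_M_same {j t t' : ZMod p} (h : t ≠ t') :
    M p E j t ∩ M p E j t' = {Sum.inr (some j)} := by
  ext q; cases q with
  | inl z =>
      simp only [Set.mem_inter_iff, inl_mem_M, Set.mem_singleton_iff]
      constructor
      · rintro ⟨h1, h2⟩; exact absurd (by rw [h1] at h2; exact add_left_cancel h2) h
      · intro hq; simp at hq
  | inr o => simp [eq_comm]

lemma inter_M_M (hdiff : ∀ i j : ZMod p, i ≠ j → Function.Bijective fun k => E i k - E j k)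
    {j j' : ZMod p} (t t' : ZMod p) (h : j ≠ j') :
    ∃ i₀, M p E j t ∩ M p E j' t' = {Sum.inl (i₀, E i₀ j + t)} := by
  obtain ⟨i₀, hi₀⟩ := (hcol p E hdiff h).surjective (t' - t)
  simp only at hi₀
  refine ⟨i₀, ?_⟩
  ext q; cases q with
  | inl z =>
      simp only [Set.mem_inter_iff, inl_mem_M, Set.mem_singleton_iff]
      constructor
      · rintro ⟨h1, h2⟩
        have hz : E z.1 j - E z.1 j' = t' - t := by
          rw [h1] at h2; linear_combination h2
        have : z.1 = i₀ := (hcol p E hdiff h).injective (by rw [hz, hi₀])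
        exact congrArg Sum.inl (Prod.ext this (by rw [h1, this]))
      · intro hq
        obtain ⟨h1, h2⟩ : z.1 = i₀ ∧ z.2 = E i₀ j + t := by
          simpa [Prod.ext_iff] using hq
        refine ⟨by rw [h2, h1], ?_⟩
        rw [h2, h1]
        linear_combination hi₀
  | inr o =>
      simp only [Set.mem_inter_iff, inr_mem_M, Set.mem_singleton_iff]
      constructor
      · rintro ⟨rfl, h2⟩; exact absurd (Option.some_injective _ h2) h
      · intro h2; simp at h2

lemma image_L0 : ⇑(sig p) '' L0 p = L0 p := by
  rw [Equiv.image_eq_preimage_symm]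
  ext q; cases q with
  | inl z => obtain ⟨z1, z2⟩ := z; simp
  | inr o => simp

lemma image_V (a : ZMod p) : ⇑(sig p) '' V p a = V p a := by
  rw [Equiv.image_eq_preimage_symm]
  ext q; cases q with
  | inl z => obtain ⟨z1, z2⟩ := z; simp
  | inr o => simp

lemma image_M (j t : ZMod p) : ⇑(sig p) '' M p E j t = M p E j (t + 1) := by
  rw [Equiv.image_eq_preimage_symm]
  ext q; cases q with
  | inl z =>
      obtain ⟨z1, z2⟩ := z
      simp only [Set.mem_preimage, sig_symm_inl, inl_mem_M]
      constructor
      · intro h; linear_combination h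
      · intro h; linear_combination h
  | inr o => simp

lemma order_sig : orderOf (sig p) = p := by
  have hp : p.Prime := Fact.out
  refine orderOf_eq_prime ?_ ?_
  · ext q; cases q with
    | inl z =>
        obtain ⟨z1, z2⟩ := z
        simp [ZMod.natCast_self]
    | inr o => simp
  · intro h
    have := congrArg (fun f : Equiv.Perm (Pt p) => f (Sum.inl (0, 0))) h
    simp only [sig_inl, Equiv.Perm.coe_one, id_eq] at this
    have : (0 : ZMod p) + 1 = 0 := by injection this with h'; injection h'
    simp at this

end More

/-- The map `Ψ` is surjective: every fully normalized Butson–Hadamard matrix of type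
`(p,p)` (given by its fully normalized difference exponent matrix `E`) arises from some
quadruple `(D, σ, y, z)` consisting of a projective plane of order `p`, an elation `σ`
of order `p` with respect to a flag `(x, L₀)`, and points `y, z ∉ L₀` with `x, y, z`
not collinear, via `σ^{E i j} (Y i) ∈ N j`. -/
theorem stmt_12 (p : ℕ) (hp : p.Prime)
    (E : Matrix (ZMod p) (ZMod p) (ZMod p))
    (hdiff : ∀ i j : ZMod p, i ≠ j → Function.Bijective fun k => E i k - E j k)
    (hnorm : ∀ i : ZMod p, E 0 i = 0 ∧ E i 0 = 0 ∧ E 1 i = i ∧ E i 1 = i) :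
    ∃ (P : Type) (Lines : Finset (Set P)) (σ : Equiv.Perm P) (x : P) (L₀ : Set P)
      (y z : P) (N : ZMod p → Set P) (Y : ZMod p → P),
      Nat.card P = p ^ 2 + p + 1 ∧ Lines.card = p ^ 2 + p + 1 ∧
      (∀ l ∈ Lines, l.ncard = p + 1) ∧
      (∀ l ∈ Lines, ∀ l' ∈ Lines, l ≠ l' → (l ∩ l').ncard = 1) ∧
      (∀ l ∈ Lines, ⇑σ '' l ∈ Lines) ∧ orderOf σ = p ∧
      L₀ ∈ Lines ∧ x ∈ L₀ ∧
      (∀ a ∈ L₀, σ a = a) ∧ (∀ l ∈ Lines, x ∈ l → ⇑σ '' l = l) ∧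
      y ∉ L₀ ∧ z ∉ L₀ ∧ (∀ l ∈ Lines, ¬(x ∈ l ∧ y ∈ l ∧ z ∈ l)) ∧
      (∀ i : ZMod p, N i ∈ Lines ∧ y ∈ N i ∧ (σ ^ i.val) z ∈ N i) ∧
      (∀ i : ZMod p, Y i ∈ N 0 ∧ (σ ^ i.val) (Y i) ∈ N 1) ∧
      ∀ i j, (σ ^ (E i j).val) (Y i) ∈ N j := by
  haveI : Fact p.Prime := ⟨hp⟩
  open Stmt12Aux More in
  have hE0 : ∀ i, E 0 i = 0 := fun i => (hnorm i).1
  have hE0' : ∀ i, E i 0 = 0 := fun i => (hnorm i).2.1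
  have hE1 : ∀ i, E 1 i = i := fun i => (hnorm i).2.2.1
  have hE1' : ∀ i, E i 1 = i := fun i => (hnorm i).2.2.2
  have hval : ∀ a : ZMod p, ((a.val : ℕ) : ZMod p) = a := fun a => by
    simp [ZMod.natCast_val, ZMod.cast_id]
  refine ⟨Pt p, Lines p E, sig p, Sum.inr none, L0 p,
    Sum.inl (0, 0), Sum.inl (1, 0), fun j => M p E j 0, fun i => Sum.inl (i, 0),
    ?_, card_Lines p E hE0, ?_, ?_, ?_, order_sig p, ?_, ?_, ?_, ?_, ?_, ?_, ?_, ?_, ?_, ?_⟩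
  · simp [Nat.card_eq_fintype_card, ZMod.card]; ring
  · -- line sizes
    intro l hl
    rcases (mem_Lines p).mp hl with rfl | ⟨a, rfl⟩ | ⟨j, t, rfl⟩
    · exact ncard_L0 p
    · exact ncard_V p a
    · exact ncard_M p E j t
  · -- pairwise intersections
    intro l hl l' hl' hne
    rcases (mem_Lines p).mp hl with rfl | ⟨a, rfl⟩ | ⟨j, t, rfl⟩ <;>
      rcases (mem_Lines p).mp hl' with rfl | ⟨a', rfl⟩ | ⟨j', t', rfl⟩
    · exact absurd rfl hne
    · rw [inter_L0_V]; exact Set.ncard_singleton _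
    · rw [inter_L0_M]; exact Set.ncard_singleton _
    · rw [Set.inter_comm, inter_L0_V]; exact Set.ncard_singleton _
    · have haa : a ≠ a' := fun h => hne (by rw [h])
      rw [inter_V_V p haa]; exact Set.ncard_singleton _
    · rw [inter_V_M]; exact Set.ncard_singleton _
    · rw [Set.inter_comm, inter_L0_M]; exact Set.ncard_singleton _
    · rw [Set.inter_comm, inter_V_M]; exact Set.ncard_singleton _
    · by_cases hj : j = j'
      · subst hj
        have htt : t ≠ t' := fun h => hne (by rw [h])
        rw [inter_M_M_same p E htt]; exact Set.ncard_singleton _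
      · obtain ⟨i₀, hi₀⟩ := inter_M_M p E hdiff t t' hj
        rw [hi₀]; exact Set.ncard_singleton _
  · -- σ maps lines to lines
    intro l hl
    rcases (mem_Lines p).mp hl with rfl | ⟨a, rfl⟩ | ⟨j, t, rfl⟩
    · rw [image_L0]; exact (mem_Lines p).mpr (Or.inl rfl)
    · rw [image_V]; exact (mem_Lines p).mpr (Or.inr (Or.inl ⟨a, rfl⟩))
    · rw [image_M]; exact (mem_Lines p).mpr (Or.inr (Or.inr ⟨j, t + 1, rfl⟩))
  · exact (mem_Lines p).mpr (Or.inl rfl)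
  · simp
  · -- σ fixes L₀ pointwise
    rintro (⟨a, k⟩ | o) ha
    · simp at ha
    · simp
  · -- σ fixes lines through x
    intro l hl hx
    rcases (mem_Lines p).mp hl with rfl | ⟨a, rfl⟩ | ⟨j, t, rfl⟩
    · exact image_L0 p
    · exact image_V p a
    · simp at hx
  · simp
  · simp
  · -- non-collinearity
    rintro l hl ⟨hx, hy, hz⟩
    rcases (mem_Lines p).mp hl with rfl | ⟨a, rfl⟩ | ⟨j, t, rfl⟩
    · simp at hy
    · have ha : a = 0 := by simpa using hy.symm
      rw [ha] at hz
      simp at hz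
    · simp at hx
  · -- the lines N i
    intro i
    refine ⟨(mem_Lines p).mpr (Or.inr (Or.inr ⟨i, 0, rfl⟩)), by simp [hE0], ?_⟩
    rw [sig_pow_inl]
    simp [hval, hE1]
  · -- the points Y i
    intro i
    refine ⟨by simp [hE0'], ?_⟩
    rw [sig_pow_inl]
    simp [hval, hE1']
  · -- the main incidence
    intro i j
    rw [sig_pow_inl]
    simp [hval]
end

section
/- If D is a Desarguesian projective plane of order p (p prime), σ an elation of order p with respect to a flag (x, L₀), and y, z points off L₀ with x,y,z not collinear, then the associated exponent matrix satisfies E_{i,j} = ij for all i,j ∈ F_p; i.e., Ψ(D, σ, y, z) is the Fourier matrix (ξ_p^{ij}). -/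
namespace Stmt13Aux
open Matrix Module

variable {K : Type} [Field K]

abbrev V3 (K : Type) := Fin 3 → K

lemma vec_decomp (x : V3 K) :
    x = x 0 • (Pi.single 0 1 : V3 K) + x 1 • (Pi.single 1 1 : V3 K) + x 2 • (Pi.single 2 1 : V3 K) := by
  funext k
  fin_cases k <;> simp [Pi.single_apply]

lemma eq_zero_of_forall_dot (a : V3 K) (h : ∀ b, a ⬝ᵥ b = 0) : a = 0 := by
  funext k
  have := h (Pi.single k 1)
  rwa [dotProduct_single, mul_one] at this

/-- dot product with `a` as a linear map. -/
noncomputable def dlin (a : V3 K) : V3 K →ₗ[K] K where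
  toFun b := a ⬝ᵥ b
  map_add' u v := dotProduct_add a u v
  map_smul' c v := by simp [dotProduct_smul, smul_eq_mul]

@[simp] lemma dlin_apply (a b : V3 K) : dlin a b = a ⬝ᵥ b := rfl

lemma dlin_surjective {a : V3 K} (ha : a ≠ 0) : Function.Surjective (dlin a) := by
  have : ∃ k, a k ≠ 0 := by
    by_contra h
    push_neg at h
    exact ha (funext fun k => h k)
  obtain ⟨k, hk⟩ := this
  intro c
  refine ⟨(c * (a k)⁻¹) • (Pi.single k 1 : V3 K), ?_⟩
  rw [dlin_apply, dotProduct_smul, dotProduct_single, mul_one, smul_eq_mul, mul_assoc,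
    inv_mul_cancel₀ hk, mul_one]

lemma finrank_ker_dlin {a : V3 K} (ha : a ≠ 0) :
    finrank K (LinearMap.ker (dlin a)) = 2 := by
  have h1 := LinearMap.finrank_range_add_finrank_ker (dlin a)
  rw [LinearMap.range_eq_top.mpr (dlin_surjective ha)] at h1
  simp [Module.finrank_fin_fun] at h1
  omega

lemma span_pair_eq_ker {a b₁ b₂ : V3 K} (h12 : LinearIndependent K ![b₁, b₂])
    (ha : a ≠ 0) (h1 : a ⬝ᵥ b₁ = 0) (h2 : a ⬝ᵥ b₂ = 0) :
    Submodule.span K {b₁, b₂} = LinearMap.ker (dlin a) := by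
  have hle : Submodule.span K {b₁, b₂} ≤ LinearMap.ker (dlin a) := by
    rw [Submodule.span_le]
    rintro v (rfl | rfl) <;> simp [LinearMap.mem_ker, h1, h2]
  have hrange : Set.range ![b₁, b₂] = {b₁, b₂} := by
    ext v
    simp [Set.range, Fin.exists_fin_two, eq_comm]
  have hsp : finrank K (Submodule.span K ({b₁, b₂} : Set (V3 K))) = 2 := by
    rw [← hrange, finrank_span_eq_card h12]
    simp
  apply Submodule.eq_of_le_of_finrank_le hle
  rw [hsp, finrank_ker_dlin ha]

lemma functional_unique {a a' b₁ b₂ : V3 K} (h12 : LinearIndependent K ![b₁, b₂])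
    (ha : a ≠ 0) (ha' : a' ≠ 0)
    (h1 : a ⬝ᵥ b₁ = 0) (h2 : a ⬝ᵥ b₂ = 0)
    (h1' : a' ⬝ᵥ b₁ = 0) (h2' : a' ⬝ᵥ b₂ = 0) :
    ∃ c : K, c ≠ 0 ∧ a' = c • a := by
  have hne : Submodule.span K ({b₁, b₂} : Set (V3 K)) ≠ ⊤ := by
    intro h
    have := finrank_span_eq_card h12
    have h3 : finrank K (V3 K) = 3 := by simp [V3]
    have hrange : Set.range ![b₁, b₂] = {b₁, b₂} := by
      ext v; simp [Set.range, Fin.exists_fin_two, eq_comm]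
    rw [hrange, h] at this
    simp [h3] at this
  obtain ⟨b₃, hb₃⟩ : ∃ b₃, b₃ ∉ Submodule.span K ({b₁, b₂} : Set (V3 K)) := by
    by_contra h
    push_neg at h
    exact hne (Submodule.eq_top_iff'.2 h)
  have hk : Submodule.span K ({b₁, b₂} : Set (V3 K)) = LinearMap.ker (dlin a) :=
    span_pair_eq_ker h12 ha h1 h2
  have hk' : Submodule.span K ({b₁, b₂} : Set (V3 K)) = LinearMap.ker (dlin a') :=
    span_pair_eq_ker h12 ha' h1' h2'
  have hab₃ : a ⬝ᵥ b₃ ≠ 0 := by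
    intro h; exact hb₃ (hk ▸ LinearMap.mem_ker.2 (by simpa using h))
  have hab₃' : a' ⬝ᵥ b₃ ≠ 0 := by
    intro h; exact hb₃ (hk' ▸ LinearMap.mem_ker.2 (by simpa using h))
  refine ⟨(a' ⬝ᵥ b₃) * (a ⬝ᵥ b₃)⁻¹, mul_ne_zero hab₃' (inv_ne_zero hab₃), ?_⟩
  set c := (a' ⬝ᵥ b₃) * (a ⬝ᵥ b₃)⁻¹ with hc
  have hd : ∀ b, (a' - c • a) ⬝ᵥ b = a' ⬝ᵥ b - c * (a ⬝ᵥ b) := by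
    intro b; simp [sub_dotProduct, smul_dotProduct, smul_eq_mul]
  have hdzero : a' - c • a = 0 := by
    by_contra hd0
    have hsp : Submodule.span K ({b₁, b₂} : Set (V3 K)) = LinearMap.ker (dlin (a' - c • a)) := by
      apply span_pair_eq_ker h12 hd0 <;> rw [hd] <;> simp [h1, h2, h1', h2']
    apply hb₃
    rw [hsp]
    apply LinearMap.mem_ker.2
    rw [dlin_apply, hd, hc, mul_assoc, inv_mul_cancel₀ hab₃, mul_one, sub_self]
  have := sub_eq_zero.1 hdzero
  exact this

section Proj
open Projectivization

variable (K) in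
abbrev PV (K : Type) [Field K] := Projectivization K (V3 K)

/-- The projective line determined by a (nonzero) functional vector `a`. -/
def lineRaw (a : V3 K) : Set (PV K) := {v | ∑ k, a k * v.rep k = 0}

lemma lineRaw_eq_dot (a : V3 K) : lineRaw a = {v : PV K | a ⬝ᵥ v.rep = 0} := rfl

lemma mem_lineRaw_iff {a : V3 K} {b : V3 K} (hb : b ≠ 0) :
    Projectivization.mk K b hb ∈ lineRaw a ↔ a ⬝ᵥ b = 0 := by
  obtain ⟨u, hu⟩ := exists_smul_eq_mk_rep K b hb
  have hrep : (Projectivization.mk K b hb).rep = (u : K) • b := by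
    rw [← hu]; rfl
  rw [lineRaw_eq_dot]
  constructor
  · intro h
    have : a ⬝ᵥ ((u : K) • b) = 0 := by rw [← hrep]; exact h
    rw [dotProduct_smul, smul_eq_mul] at this
    exact (mul_eq_zero.1 this).resolve_left (Units.ne_zero u)
  · intro h
    show a ⬝ᵥ _ = 0
    rw [hrep, dotProduct_smul, smul_eq_mul, h, mul_zero]

lemma lineRaw_smul {c : K} (hc : c ≠ 0) (a : V3 K) : lineRaw (c • a) = lineRaw a := by
  ext v
  rw [lineRaw_eq_dot, lineRaw_eq_dot]
  simp only [Set.mem_setOf_eq, smul_dotProduct, smul_eq_mul]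
  constructor
  · intro h; exact (mul_eq_zero.1 h).resolve_left hc
  · intro h; rw [h, mul_zero]

lemma mem_lineRaw_rep {a : V3 K} {v : PV K} : v ∈ lineRaw a ↔ a ⬝ᵥ v.rep = 0 := Iff.rfl

lemma lineRaw_rep_eq (b : V3 K) (hb : b ≠ 0) :
    lineRaw ((Projectivization.mk K b hb).rep) = lineRaw b := by
  obtain ⟨u, hu⟩ := exists_smul_eq_mk_rep K b hb
  rw [← hu]
  exact lineRaw_smul (Units.ne_zero u) b

lemma indep_reps {v w : PV K} (h : v ≠ w) : LinearIndependent K ![v.rep, w.rep] := by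
  rw [linearIndependent_fin2]
  refine ⟨w.rep_nonzero, fun c hc => ?_⟩
  apply h
  rw [← v.mk_rep, ← w.mk_rep]
  rw [mk_eq_mk_iff']
  exact ⟨c, hc⟩

/-- The projective equivalence induced by a linear equivalence. -/
noncomputable def projEquiv (g : V3 K ≃ₗ[K] V3 K) : PV K ≃ PV K where
  toFun := Projectivization.map (g : V3 K →ₗ[K] V3 K) g.injective
  invFun := Projectivization.map (g.symm : V3 K →ₗ[K] V3 K) g.symm.injective
  left_inv := by
    intro v
    induction v using Projectivization.ind with
    | h v hv => simp [Projectivization.map_mk]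
  right_inv := by
    intro v
    induction v using Projectivization.ind with
    | h v hv => simp [Projectivization.map_mk]

lemma projEquiv_mk (g : V3 K ≃ₗ[K] V3 K) (b : V3 K) (hb : b ≠ 0) :
    projEquiv g (Projectivization.mk K b hb) =
      Projectivization.mk K (g b) (by simp [hb]) := by
  simp [projEquiv, Projectivization.map_mk]

/-- transpose action of `g` on functionals. -/
noncomputable def transF (a : V3 K) (g : V3 K ≃ₗ[K] V3 K) : V3 K :=
  fun k => a ⬝ᵥ g (Pi.single k 1)

lemma dot_transF (a : V3 K) (g : V3 K ≃ₗ[K] V3 K) (b : V3 K) :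
    (transF a g) ⬝ᵥ b = a ⬝ᵥ g b := by
  conv_rhs => rw [vec_decomp b]
  rw [map_add, map_add, _root_.map_smul, _root_.map_smul, _root_.map_smul,
    dotProduct_add, dotProduct_add, dotProduct_smul, dotProduct_smul, dotProduct_smul]
  rw [dotProduct, Fin.sum_univ_three]
  simp [transF, smul_eq_mul, mul_comm]

lemma transF_ne_zero {a : V3 K} (ha : a ≠ 0) (g : V3 K ≃ₗ[K] V3 K) : transF a g ≠ 0 := by
  intro h
  apply ha
  apply eq_zero_of_forall_dot
  intro b
  have := dot_transF a g (g.symm b)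
  rw [h, LinearEquiv.apply_symm_apply] at this
  simpa using this.symm

lemma preimage_lineRaw (g : V3 K ≃ₗ[K] V3 K) (a : V3 K) :
    (projEquiv g) ⁻¹' lineRaw a = lineRaw (transF a g) := by
  ext v
  induction v using Projectivization.ind with
  | h b hb =>
    rw [Set.mem_preimage, projEquiv_mk, mem_lineRaw_iff, mem_lineRaw_iff, dot_transF]

lemma image_lineRaw (g : V3 K ≃ₗ[K] V3 K) (a : V3 K) :
    (projEquiv g) '' lineRaw a = lineRaw (transF a g.symm) := by
  have hsymm : (projEquiv g).symm = projEquiv g.symm := by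
    ext v
    induction v using Projectivization.ind with
    | h b hb => rfl
  rw [Equiv.image_eq_preimage_symm, hsymm, preimage_lineRaw]

end Proj

section Affine
open Projectivization

lemma affvec_ne_zero (q : K × K) : (![q.1, q.2, 1] : V3 K) ≠ 0 := by
  intro h
  have := congrFun h 2
  simp at this

/-- The affine chart embedding. -/
noncomputable def affP (q : K × K) : PV K :=
  Projectivization.mk K ![q.1, q.2, 1] (affvec_ne_zero q)

lemma affP_mem_lineRaw {a : V3 K} {q : K × K} :
    affP q ∈ lineRaw a ↔ a 0 * q.1 + a 1 * q.2 + a 2 = 0 := by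
  rw [affP, mem_lineRaw_iff, dotProduct, Fin.sum_univ_three]
  simp [mul_comm]

lemma affP_injective : Function.Injective (affP (K := K)) := by
  intro q q' h
  rw [affP, affP, mk_eq_mk_iff'] at h
  obtain ⟨c, hc⟩ := h
  have h2 := congrFun hc 2
  simp at h2
  have h0 := congrFun hc 0
  have h1 := congrFun hc 1
  simp [h2] at h0 h1
  exact (Prod.ext h0 h1).symm

lemma affP_rep_two (q : K × K) : (affP q).rep 2 ≠ 0 := by
  obtain ⟨u, hu⟩ := exists_smul_eq_mk_rep K ![q.1, q.2, 1] (affvec_ne_zero q)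
  have : (affP q).rep = (u : K) • ![q.1, q.2, 1] := by rw [affP, ← hu]; rfl
  rw [this]
  simp

lemma exists_affP {v : PV K} (h : v.rep 2 ≠ 0) : ∃ q : K × K, affP q = v := by
  refine ⟨(v.rep 0 / v.rep 2, v.rep 1 / v.rep 2), ?_⟩
  rw [affP, ← v.mk_rep, mk_eq_mk_iff']
  refine ⟨(v.rep 2)⁻¹, ?_⟩
  funext k
  fin_cases k <;> simp [div_eq_inv_mul, inv_mul_cancel₀ h]

lemma rep_two_of_mem_single {v : PV K} (h : v ∈ lineRaw (Pi.single 2 1)) : v.rep 2 = 0 := by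
  rw [mem_lineRaw_rep, single_dotProduct, one_mul] at h
  exact h

lemma mem_single_of_rep_two {v : PV K} (h : v.rep 2 = 0) : v ∈ lineRaw (Pi.single 2 1) := by
  rw [mem_lineRaw_rep, single_dotProduct, one_mul]
  exact h

/-- the two affine points are projectively distinct and their lifted vectors independent -/
lemma indep_affvec {q₁ q₂ : K × K} (h : q₁ ≠ q₂) :
    LinearIndependent K ![(![q₁.1, q₁.2, 1] : V3 K), ![q₂.1, q₂.2, 1]] := by
  rw [linearIndependent_fin2]
  refine ⟨affvec_ne_zero q₂, fun c hc => ?_⟩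
  have h2 := congrFun hc 2
  simp at h2
  have h0 := congrFun hc 0
  have h1 := congrFun hc 1
  simp [h2] at h0 h1
  exact h (Prod.ext h0.symm h1.symm)

/-- Parametrization: any affine point of the line through two distinct affine points
is an affine combination of them. -/
lemma param_line {a : V3 K} (ha : a ≠ 0) {q₁ q₂ q : K × K} (h12 : q₁ ≠ q₂)
    (h1 : affP q₁ ∈ lineRaw a) (h2 : affP q₂ ∈ lineRaw a) (hq : affP q ∈ lineRaw a) :
    ∃ t : K, q = q₁ + t • (q₂ - q₁) := by
  set v₁ : V3 K := ![q₁.1, q₁.2, 1]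
  set v₂ : V3 K := ![q₂.1, q₂.2, 1]
  set v : V3 K := ![q.1, q.2, 1]
  have hdot : ∀ {w : K × K}, affP w ∈ lineRaw a → a ⬝ᵥ (![w.1, w.2, 1] : V3 K) = 0 := by
    intro w hw
    rw [affP, mem_lineRaw_iff] at hw
    exact hw
  have hspan : Submodule.span K {v₁, v₂} = LinearMap.ker (dlin a) :=
    span_pair_eq_ker (indep_affvec h12) ha (hdot h1) (hdot h2)
  have hv : v ∈ Submodule.span K ({v₁, v₂} : Set (V3 K)) := by
    rw [hspan]
    have := hdot hq
    rw [dotProduct, Fin.sum_univ_three] at this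
    exact LinearMap.mem_ker.2 (by rw [dlin_apply, dotProduct, Fin.sum_univ_three]; exact this)
  rw [Submodule.mem_span_pair] at hv
  obtain ⟨α, β, hab⟩ := hv
  have e2 := congrFun hab 2
  simp [v, v₁, v₂] at e2
  have e0 := congrFun hab 0
  have e1 := congrFun hab 1
  simp [v, v₁, v₂] at e0 e1
  refine ⟨β, ?_⟩
  have hα : α = 1 - β := by linear_combination e2
  ext
  · simp [hα] at e0 ⊢
    rw [← e0]; ring
  · simp [hα] at e1 ⊢
    rw [← e1]; ring

end Affine

section MainLemma
open Projectivization

lemma rep_eq_unit_smul (b : V3 K) (hb : b ≠ 0) :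
    ∃ u : Kˣ, (Projectivization.mk K b hb).rep = (u : K) • b := by
  obtain ⟨u, hu⟩ := exists_smul_eq_mk_rep K b hb
  exact ⟨u, by rw [← hu]; rfl⟩

lemma single0_ne_zero : (Pi.single 0 1 : V3 K) ≠ 0 := by
  intro h
  have := congrFun h 0
  simp at this

/-- the point `(1:0:0)`. -/
noncomputable def px0 : PV K := Projectivization.mk K (Pi.single 0 1) single0_ne_zero

lemma px0_mem {a : V3 K} : px0 ∈ lineRaw a ↔ a 0 = 0 := by
  rw [px0, mem_lineRaw_iff, dotProduct_single, mul_one]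

lemma vec3_eq_zero {a : V3 K} (h0 : a 0 = 0) (h1 : a 1 = 0) (h2 : a 2 = 0) : a = 0 := by
  funext k
  fin_cases k <;> assumption

theorem mainPG {p : ℕ} [Fact p.Prime] (τ : Equiv.Perm (PV (ZMod p)))
    (hτ1 : τ ≠ 1)
    (Hauto : ∀ a : V3 (ZMod p), a ≠ 0 → ∃ a', a' ≠ 0 ∧ ⇑τ '' lineRaw a = lineRaw a')
    (Hel1 : ∀ v : PV (ZMod p), v.rep 2 = 0 → τ v = v)
    (Hel2 : ∀ a : V3 (ZMod p), a ≠ 0 → px0 ∈ lineRaw a → ⇑τ '' lineRaw a = lineRaw a)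
    (qy qz : ZMod p × ZMod p)
    (Hnc : ∀ a : V3 (ZMod p), a ≠ 0 →
      ¬(px0 ∈ lineRaw a ∧ affP qy ∈ lineRaw a ∧ affP qz ∈ lineRaw a))
    (N' : ZMod p → Set (PV (ZMod p)))
    (hN' : ∀ i : ZMod p, (∃ a, a ≠ 0 ∧ N' i = lineRaw a) ∧ affP qy ∈ N' i ∧
      (τ ^ i.val) (affP qz) ∈ N' i)
    (Y' : ZMod p → PV (ZMod p))
    (hY' : ∀ i : ZMod p, Y' i ∈ N' 0 ∧ (τ ^ i.val) (Y' i) ∈ N' 1)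
    (E : Matrix (ZMod p) (ZMod p) (ZMod p))
    (hE : ∀ i j, (τ ^ (E i j).val) (Y' i) ∈ N' j) :
    ∀ i j : ZMod p, E i j = i * j := by
  haveI : NeZero p := ⟨(Fact.out : p.Prime).ne_zero⟩
  -- powers of τ fix infinite points
  have hfixinf : ∀ (n : ℕ) (v : PV (ZMod p)), v.rep 2 = 0 → (τ ^ n) v = v := by
    intro n v hv
    induction n with
    | zero => rfl
    | succ n ih => rw [pow_succ, Equiv.Perm.mul_apply, Hel1 v hv, ih]
  -- τ preserves affine points
  have haffcl : ∀ v : PV (ZMod p), (τ v).rep 2 = 0 → v.rep 2 = 0 := by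
    intro v h
    have h2 : τ (τ v) = τ v := Hel1 _ h
    have h3 : τ v = v := τ.injective h2
    rw [← h3]; exact h
  have haff : ∀ q : (ZMod p) × (ZMod p), (τ (affP q)).rep 2 ≠ 0 :=
    fun q h => affP_rep_two q (haffcl _ h)
  choose F hF using fun q : (ZMod p) × (ZMod p) => exists_affP (haff q)
  -- second coordinate preserved
  have hF2 : ∀ q : (ZMod p) × (ZMod p), (F q).2 = q.2 := by
    intro q
    set a : V3 (ZMod p) := ![0, 1, -q.2] with ha_def
    have ha : a ≠ 0 := by
      intro h; have := congrFun h 1; simp [ha_def] at this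
    have hx : px0 ∈ lineRaw a := px0_mem.2 (by simp [ha_def])
    have hq : affP q ∈ lineRaw a := affP_mem_lineRaw.2 (by simp [ha_def])
    have himg := Hel2 a ha hx
    have hτq : τ (affP q) ∈ lineRaw a := by
      rw [← himg]; exact ⟨affP q, hq, rfl⟩
    rw [← hF q] at hτq
    have := affP_mem_lineRaw.1 hτq
    simp [ha_def] at this
    linear_combination this
  -- first coordinate independent of second
  have hF1 : ∀ u v v' : (ZMod p), (F (u, v)).1 = (F (u, v')).1 := by
    intro u v v'
    set a : V3 (ZMod p) := ![1, 0, -u] with ha_def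
    have ha : a ≠ 0 := by
      intro h; have := congrFun h 0; simp [ha_def] at this
    obtain ⟨a', ha', himg⟩ := Hauto a ha
    -- the vertical direction point is fixed and on both lines
    have hdne : (![0, 1, 0] : V3 (ZMod p)) ≠ 0 := by
      intro h; have := congrFun h 1; simp at this
    set d : PV (ZMod p) := Projectivization.mk (ZMod p) ![0, 1, 0] hdne with hd_def
    have hd2 : d.rep 2 = 0 := by
      obtain ⟨w, hw⟩ := rep_eq_unit_smul (![0, 1, 0] : V3 (ZMod p)) hdne
      rw [hd_def, hw]; simp
    have hdmem : d ∈ lineRaw a := by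
      rw [hd_def, mem_lineRaw_iff, dotProduct, Fin.sum_univ_three]
      simp [ha_def]
    have hdmem' : d ∈ lineRaw a' := by
      rw [← himg]
      exact ⟨d, hdmem, Hel1 d hd2⟩
    have ha'1 : a' 1 = 0 := by
      rw [hd_def, mem_lineRaw_iff, dotProduct, Fin.sum_univ_three] at hdmem'
      simpa using hdmem'
    have hmem : ∀ w : (ZMod p), affP (F (u, w)) ∈ lineRaw a' := by
      intro w
      rw [hF, ← himg]
      refine ⟨affP (u, w), ?_, rfl⟩
      exact affP_mem_lineRaw.2 (by simp [ha_def])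
    have he := affP_mem_lineRaw.1 (hmem v)
    have he' := affP_mem_lineRaw.1 (hmem v')
    rw [ha'1] at he he'
    have ha'0 : a' 0 ≠ 0 := by
      intro h0
      rw [h0] at he
      have h2 : a' 2 = 0 := by linear_combination he
      exact ha' (vec3_eq_zero h0 ha'1 h2)
    have : a' 0 * (F (u, v)).1 = a' 0 * (F (u, v')).1 := by linear_combination he - he'
    exact mul_left_cancel₀ ha'0 this
  set G : (ZMod p) → (ZMod p) := fun u => (F (u, 0)).1 with hG_def
  have hFG : ∀ q : (ZMod p) × (ZMod p), F q = (G q.1, q.2) := by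
    intro q
    have h1 : (F q).1 = G q.1 := by
      rw [hG_def]
      simpa using hF1 q.1 q.2 0
    exact Prod.ext h1 (hF2 q)
  -- slope-one line forces G to be a translation
  obtain ⟨c, hc⟩ : ∃ c : (ZMod p), ∀ u : (ZMod p), G u = u + c := by
    set a : V3 (ZMod p) := ![1, -1, 0] with ha_def
    have ha : a ≠ 0 := by
      intro h; have := congrFun h 0; simp [ha_def] at this
    obtain ⟨a', ha', himg⟩ := Hauto a ha
    have hdne : (![1, 1, 0] : V3 (ZMod p)) ≠ 0 := by
      intro h; have := congrFun h 1; simp at this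
    set d : PV (ZMod p) := Projectivization.mk (ZMod p) ![1, 1, 0] hdne with hd_def
    have hd2 : d.rep 2 = 0 := by
      obtain ⟨w, hw⟩ := rep_eq_unit_smul (![1, 1, 0] : V3 (ZMod p)) hdne
      rw [hd_def, hw]; simp
    have hdmem : d ∈ lineRaw a := by
      rw [hd_def, mem_lineRaw_iff, dotProduct, Fin.sum_univ_three]
      simp [ha_def]
    have hdmem' : d ∈ lineRaw a' := by
      rw [← himg]
      exact ⟨d, hdmem, Hel1 d hd2⟩
    have ha'sum : a' 0 + a' 1 = 0 := by
      rw [hd_def, mem_lineRaw_iff, dotProduct, Fin.sum_univ_three] at hdmem'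
      simpa using hdmem'
    have hmem : ∀ u : (ZMod p), affP (G u, u) ∈ lineRaw a' := by
      intro u
      have : affP (u, u) ∈ lineRaw a := affP_mem_lineRaw.2 (by simp [ha_def])
      have himage : τ (affP (u, u)) ∈ lineRaw a' := by
        rw [← himg]; exact ⟨affP (u, u), this, rfl⟩
      rw [← hF, hFG] at himage
      exact himage
    have ha'0 : a' 0 ≠ 0 := by
      intro h0
      have h1 : a' 1 = 0 := by linear_combination ha'sum - h0
      have he := affP_mem_lineRaw.1 (hmem 0)
      rw [h0, h1] at he
      have h2 : a' 2 = 0 := by linear_combination he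
      exact ha' (vec3_eq_zero h0 h1 h2)
    refine ⟨-(a' 2 / a' 0), fun u => ?_⟩
    have he := affP_mem_lineRaw.1 (hmem u)
    have h1 : a' 1 = -(a' 0) := by linear_combination ha'sum
    rw [h1] at he
    field_simp
    linear_combination he
  have hτaff : ∀ q : (ZMod p) × (ZMod p), τ (affP q) = affP (q.1 + c, q.2) := by
    intro q
    rw [← hF, hFG, hc]
  -- c is nonzero
  have hc0 : c ≠ 0 := by
    intro h0
    apply hτ1
    ext v
    by_cases hv : v.rep 2 = 0
    · rw [Hel1 v hv]; rfl
    · obtain ⟨q, rfl⟩ := exists_affP hv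
      rw [hτaff, h0, add_zero]
      rfl
  -- powers are translations
  have hpow : ∀ (n : ℕ) (q : (ZMod p) × (ZMod p)), (τ ^ n) (affP q) = affP (q.1 + (n : (ZMod p)) * c, q.2) := by
    intro n
    induction n with
    | zero => intro q; simp
    | succ n ih =>
      intro q
      calc (τ ^ (n + 1)) (affP q) = τ ((τ ^ n) (affP q)) := by
            rw [pow_succ', Equiv.Perm.mul_apply]
        _ = τ (affP (q.1 + (n : ZMod p) * c, q.2)) := by rw [ih]
        _ = affP (q.1 + (n : ZMod p) * c + c, q.2) := hτaff _
        _ = affP (q.1 + ((n + 1 : ℕ) : ZMod p) * c, q.2) :=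
            congrArg affP (Prod.ext (by push_cast; ring) rfl)
  have hpowz : ∀ i : ZMod p, (τ ^ i.val) (affP qz) = affP (qz.1 + i * c, qz.2) := by
    intro i
    rw [hpow, ZMod.natCast_zmod_val]
  -- y and z have distinct second coordinates
  have hyz2 : qy.2 ≠ qz.2 := by
    intro h
    set a : V3 (ZMod p) := ![0, 1, -qy.2] with ha_def
    have ha : a ≠ 0 := by
      intro hh; have := congrFun hh 1; simp [ha_def] at this
    refine Hnc a ha ⟨px0_mem.2 (by simp [ha_def]), ?_, ?_⟩
    · exact affP_mem_lineRaw.2 (by simp [ha_def])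
    · apply affP_mem_lineRaw.2
      simp [ha_def]
      linear_combination h.symm
  have hyzne : qy ≠ qz := fun h => hyz2 (by rw [h])
  -- unpack the three lines we need
  intro i j
  obtain ⟨⟨a0, ha0, hL0⟩, hy0, hz0'⟩ := hN' 0
  obtain ⟨⟨a1, ha1, hL1⟩, hy1, hz1'⟩ := hN' 1
  obtain ⟨⟨aj, haj, hLj⟩, hyj, hzj'⟩ := hN' j
  rw [hpowz] at hz0' hz1' hzj'
  rw [show (0 : ZMod p) * c = 0 from zero_mul c, add_zero] at hz0'
  rw [one_mul] at hz1'
  -- Y' i is an affine point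
  have hYaff : ∃ qY : (ZMod p) × (ZMod p), affP qY = Y' i := by
    by_contra hno
    push_neg at hno
    have hY2 : (Y' i).rep 2 = 0 := by
      by_contra h2
      obtain ⟨q, hq⟩ := exists_affP h2
      exact hno q hq
    have hfix : (τ ^ i.val) (Y' i) = Y' i := hfixinf _ _ hY2
    have hmem0 : Y' i ∈ lineRaw a0 := by rw [← hL0]; exact (hY' i).1
    have hmem1 : Y' i ∈ lineRaw a1 := by
      rw [← hL1]
      have := (hY' i).2
      rwa [hfix] at this
    have hyne : Y' i ≠ affP qy := by
      intro h
      exact (affP_rep_two qy) (by rw [← h]; exact hY2)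
    have hy0' : affP qy ∈ lineRaw a0 := by rw [← hL0]; exact hy0
    have hy1' : affP qy ∈ lineRaw a1 := by rw [← hL1]; exact hy1
    obtain ⟨cc, hcc0, hcc⟩ := functional_unique (indep_reps hyne) ha0 ha1
      (mem_lineRaw_rep.1 hmem0) (mem_lineRaw_rep.1 hy0')
      (mem_lineRaw_rep.1 hmem1) (mem_lineRaw_rep.1 hy1')
    have hsame : lineRaw a1 = lineRaw a0 := by rw [hcc, lineRaw_smul hcc0]
    -- now line a0 contains affP qz, affP (qz.1+c, qz.2), affP qy
    have hz0m : affP qz ∈ lineRaw a0 := by rw [← hL0]; exact hz0'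
    have hz1m : affP (qz.1 + c, qz.2) ∈ lineRaw a0 := by
      rw [← hsame, ← hL1]; exact hz1'
    have hym : affP qy ∈ lineRaw a0 := hy0'
    have e1 := affP_mem_lineRaw.1 hz0m
    have e2 := affP_mem_lineRaw.1 hz1m
    have e3 := affP_mem_lineRaw.1 hym
    simp only at e1 e2 e3
    have h00 : a0 0 = 0 := by
      have : a0 0 * c = 0 := by linear_combination e2 - e1
      exact (mul_eq_zero.1 this).resolve_right hc0
    have h01 : a0 1 = 0 := by
      have : a0 1 * (qy.2 - qz.2) = 0 := by
        rw [h00] at e1 e3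
        linear_combination e3 - e1
      exact (mul_eq_zero.1 this).resolve_right (sub_ne_zero.2 hyz2)
    have h02 : a0 2 = 0 := by
      rw [h00, h01] at e1
      linear_combination e1
    exact ha0 (vec3_eq_zero h00 h01 h02)
  obtain ⟨qY, hqY⟩ := hYaff
  -- parametrize Y' i on line N' 0
  have hy0' : affP qy ∈ lineRaw a0 := by rw [← hL0]; exact hy0
  have hz0m : affP qz ∈ lineRaw a0 := by rw [← hL0]; exact hz0'
  have hqY0 : affP qY ∈ lineRaw a0 := by rw [hqY, ← hL0]; exact (hY' i).1
  obtain ⟨t, ht⟩ := param_line ha0 hyzne hy0' hz0m hqY0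
  have htq1 : qY.1 = qy.1 + t * (qz.1 - qy.1) := by
    rw [ht]; simp [smul_eq_mul]
  have htq2 : qY.2 = qy.2 + t * (qz.2 - qy.2) := by
    rw [ht]; simp [smul_eq_mul]
  -- the image of Y' i on line N' 1 gives t = i
  have hyzne1 : qy ≠ (qz.1 + c, qz.2) := by
    intro h
    apply hyz2
    rw [h]
  have hy1' : affP qy ∈ lineRaw a1 := by rw [← hL1]; exact hy1
  have hz1m : affP (qz.1 + c, qz.2) ∈ lineRaw a1 := by rw [← hL1]; exact hz1'
  have hYim : affP (qY.1 + i * c, qY.2) ∈ lineRaw a1 := by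
    rw [← hL1]
    have := (hY' i).2
    rw [← hqY, hpow, ZMod.natCast_zmod_val] at this
    exact this
  obtain ⟨s, hs⟩ := param_line ha1 hyzne1 hy1' hz1m hYim
  have hs1 : qY.1 + i * c = qy.1 + s * (qz.1 + c - qy.1) := by
    rw [show qY.1 + i * c = ((qY.1 + i * c, qY.2) : (ZMod p) × (ZMod p)).1 from rfl, hs]
    simp [smul_eq_mul]
  have hs2 : qY.2 = qy.2 + s * (qz.2 - qy.2) := by
    rw [show qY.2 = ((qY.1 + i * c, qY.2) : (ZMod p) × (ZMod p)).2 from rfl, hs]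
    simp [smul_eq_mul]
  have hst : s = t := by
    have : (s - t) * (qz.2 - qy.2) = 0 := by linear_combination htq2 - hs2
    have := (mul_eq_zero.1 this).resolve_right (sub_ne_zero.2 (Ne.symm hyz2))
    linear_combination this
  have hti : t = i := by
    rw [hst] at hs1
    have : (i - t) * c = 0 := by linear_combination hs1 - htq1
    have := (mul_eq_zero.1 this).resolve_right hc0
    linear_combination -this
  -- finally, the line N' j gives E i j = i * j
  have hyznej : qy ≠ (qz.1 + j * c, qz.2) := by
    intro h
    apply hyz2
    rw [h]
  have hyj' : affP qy ∈ lineRaw aj := by rw [← hLj]; exact hyj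
  have hzjm : affP (qz.1 + j * c, qz.2) ∈ lineRaw aj := by rw [← hLj]; exact hzj'
  have hEim : affP (qY.1 + E i j * c, qY.2) ∈ lineRaw aj := by
    rw [← hLj]
    have := hE i j
    rw [← hqY, hpow, ZMod.natCast_zmod_val] at this
    exact this
  obtain ⟨s', hs'⟩ := param_line haj hyznej hyj' hzjm hEim
  have hs'1 : qY.1 + E i j * c = qy.1 + s' * (qz.1 + j * c - qy.1) := by
    rw [show qY.1 + E i j * c = ((qY.1 + E i j * c, qY.2) : (ZMod p) × (ZMod p)).1 from rfl, hs']
    simp [smul_eq_mul]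
  have hs'2 : qY.2 = qy.2 + s' * (qz.2 - qy.2) := by
    rw [show qY.2 = ((qY.1 + E i j * c, qY.2) : (ZMod p) × (ZMod p)).2 from rfl, hs']
    simp [smul_eq_mul]
  have hs't : s' = t := by
    have : (s' - t) * (qz.2 - qy.2) = 0 := by linear_combination htq2 - hs'2
    have := (mul_eq_zero.1 this).resolve_right (sub_ne_zero.2 (Ne.symm hyz2))
    linear_combination this
  -- combine
  rw [hs't, hti] at hs'1
  have : (E i j - i * j) * c = 0 := by
    rw [hti] at htq1
    linear_combination hs'1 - htq1
  have := (mul_eq_zero.1 this).resolve_right hc0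
  linear_combination this

end MainLemma




end Stmt13Aux

open Stmt13Aux Projectivization Module Matrix in
/-- If the projective plane is Desarguesian (isomorphic to `PG(2,p)`), then the exponent
matrix produced by `Ψ` is `E i j = i * j`, i.e. `Ψ(D, σ, y, z)` is the Fourier matrix. -/
theorem stmt_13 (p : ℕ) [Fact p.Prime]
    (P : Type) (Lines : Finset (Set P))
    (hP : Nat.card P = p ^ 2 + p + 1) (hL : Lines.card = p ^ 2 + p + 1)
    (hlc : ∀ l ∈ Lines, l.ncard = p + 1)
    (hmeet : ∀ l ∈ Lines, ∀ l' ∈ Lines, l ≠ l' → (l ∩ l').ncard = 1)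
    (hdes : ∃ pt : Projectivization (ZMod p) (Fin 3 → ZMod p) → P,
      Function.Bijective pt ∧
      ∀ l : Set P, l ∈ Lines ↔
        ∃ w : Projectivization (ZMod p) (Fin 3 → ZMod p),
          l = pt '' {v | ∑ k, w.rep k * v.rep k = 0})
    (σ : Equiv.Perm P) (hauto : ∀ l ∈ Lines, ⇑σ '' l ∈ Lines)
    (hord : orderOf σ = p)
    (x : P) (L₀ : Set P) (hL₀ : L₀ ∈ Lines) (hx : x ∈ L₀)
    (hel1 : ∀ a ∈ L₀, σ a = a)
    (hel2 : ∀ l ∈ Lines, x ∈ l → ⇑σ '' l = l)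
    (y z : P) (hy : y ∉ L₀) (hz : z ∉ L₀)
    (hnc : ∀ l ∈ Lines, ¬(x ∈ l ∧ y ∈ l ∧ z ∈ l))
    (N : ZMod p → Set P)
    (hN : ∀ i : ZMod p, N i ∈ Lines ∧ y ∈ N i ∧ (σ ^ i.val) z ∈ N i)
    (Y : ZMod p → P)
    (hY : ∀ i : ZMod p, Y i ∈ N 0 ∧ (σ ^ i.val) (Y i) ∈ N 1)
    (E : Matrix (ZMod p) (ZMod p) (ZMod p))
    (hE : ∀ i j, (σ ^ (E i j).val) (Y i) ∈ N j) :
    ∀ i j : ZMod p, E i j = i * j := by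
  classical
  obtain ⟨pt, hptbij, hlines⟩ := hdes
  have hlines' : ∀ l : Set P, l ∈ Lines ↔
      ∃ w : PV (ZMod p), l = pt '' lineRaw w.rep := hlines
  set ptE : PV (ZMod p) ≃ P := Equiv.ofBijective pt hptbij with hptE
  have hptE_apply : ∀ v, ptE v = pt v := fun _ => rfl
  -- the line L₀ and its functional
  obtain ⟨w₀, hL₀eq⟩ := (hlines' L₀).1 hL₀
  have ha₀ : w₀.rep ≠ 0 := w₀.rep_nonzero
  set a₀ : V3 (ZMod p) := w₀.rep with ha₀def
  -- the fixed point x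
  set x' : PV (ZMod p) := ptE.symm x with hx'def
  set u : V3 (ZMod p) := x'.rep with hudef
  have hu0 : u ≠ 0 := x'.rep_nonzero
  have hxu : a₀ ⬝ᵥ u = 0 := by
    have hxl : x ∈ pt '' lineRaw a₀ := by rw [← hL₀eq]; exact hx
    obtain ⟨v, hv, hvx⟩ := hxl
    have hvv : v = x' := by
      rw [hx'def, ← hvx, ← hptE_apply, Equiv.symm_apply_apply]
    have hv' : x' ∈ lineRaw a₀ := hvv ▸ hv
    exact mem_lineRaw_rep.1 hv'
  -- choose u' in ker a₀ independent from u
  have hnotle : ¬ (LinearMap.ker (dlin a₀) ≤ Submodule.span (ZMod p) {u}) := by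
    intro hle
    have h1 := Submodule.finrank_mono hle
    rw [finrank_ker_dlin ha₀, finrank_span_singleton hu0] at h1
    omega
  obtain ⟨u', hu'ker, hu'span⟩ := SetLike.not_le_iff_exists.1 hnotle
  have hxu' : a₀ ⬝ᵥ u' = 0 := by simpa using hu'ker
  have hpair : LinearIndependent (ZMod p) ![u', u] := by
    rw [linearIndependent_fin2]
    refine ⟨hu0, fun cc hcc => hu'span ?_⟩
    simp only [Matrix.cons_val_one, Matrix.head_cons, Matrix.cons_val_zero] at hcc
    rw [← hcc]
    exact Submodule.smul_mem _ _ (Submodule.mem_span_singleton_self u)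
  -- choose u'' with a₀ ⬝ᵥ u'' ≠ 0
  obtain ⟨k, hk⟩ : ∃ k, a₀ k ≠ 0 := by
    by_contra h
    push_neg at h
    exact ha₀ (funext fun k => h k)
  set u'' : V3 (ZMod p) := Pi.single k 1 with hu''def
  have hxu'' : a₀ ⬝ᵥ u'' ≠ 0 := by
    rw [hu''def, dotProduct_single, mul_one]
    exact hk
  -- the triple is linearly independent
  have htriple : LinearIndependent (ZMod p) ![u, u', u''] := by
    rw [Fintype.linearIndependent_iff]
    intro g hg
    rw [Fin.sum_univ_three] at hg
    simp only [Matrix.cons_val_zero, Matrix.cons_val_one, Matrix.head_cons,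
      Matrix.cons_val_two, Matrix.tail_cons] at hg
    have h2 : g 2 = 0 := by
      have := congrArg (fun v => a₀ ⬝ᵥ v) hg
      simp only [dotProduct_add, dotProduct_smul, smul_eq_mul, hxu, hxu', mul_zero,
        dotProduct_zero, add_zero, zero_add] at this
      exact (mul_eq_zero.1 this).resolve_right hxu''
    have hg2 : g 0 • u + g 1 • u' = 0 := by
      rw [h2, zero_smul, add_zero] at hg
      exact hg
    have := Fintype.linearIndependent_iff.1 hpair ![g 1, g 0] (by
      rw [Fin.sum_univ_two]
      simp only [Matrix.cons_val_zero, Matrix.cons_val_one, Matrix.head_cons]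
      rw [add_comm]
      exact hg2)
    intro i
    fin_cases i
    · exact this 1
    · exact this 0
    · exact h2
  have hcard : Fintype.card (Fin 3) = finrank (ZMod p) (V3 (ZMod p)) := by
    simp [Module.finrank_fin_fun]
  set bas : Basis (Fin 3) (ZMod p) (V3 (ZMod p)) :=
    basisOfLinearIndependentOfCardEqFinrank htriple hcard with hbasdef
  have hbas : ∀ i, bas i = ![u, u', u''] i := by
    intro i
    rw [hbasdef, coe_basisOfLinearIndependentOfCardEqFinrank]
  set g : V3 (ZMod p) ≃ₗ[ZMod p] V3 (ZMod p) :=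
    (Pi.basisFun (ZMod p) (Fin 3)).equiv bas (Equiv.refl _) with hgdef
  have hge : ∀ i : Fin 3, g (Pi.single i 1) = bas i := by
    intro i
    rw [hgdef]
    have := Basis.equiv_apply (b := Pi.basisFun (ZMod p) (Fin 3)) (b' := bas) (i := i)
      (e := Equiv.refl _)
    rw [Pi.basisFun_apply] at this
    simpa using this
  have hge0 : g (Pi.single 0 1) = u := by rw [hge 0, hbas 0]; rfl
  have hge1 : g (Pi.single 1 1) = u' := by rw [hge 1, hbas 1]; rfl
  -- the full coordinate equivalence
  set e : PV (ZMod p) ≃ P := (projEquiv g).trans ptE with hedef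
  have he_apply : ∀ v, e v = ptE (projEquiv g v) := fun _ => rfl
  have he_image : ∀ S : Set (PV (ZMod p)), e '' S = ptE '' (projEquiv g '' S) := by
    intro S
    rw [hedef, Equiv.coe_trans, Set.image_comp]
  -- characterization of the lines through e
  have hT1 : ∀ l : Set P, l ∈ Lines ↔ ∃ a, a ≠ 0 ∧ l = e '' lineRaw a := by
    intro l
    constructor
    · intro hl
      obtain ⟨w, hw⟩ := (hlines' l).1 hl
      refine ⟨transF w.rep g, transF_ne_zero w.rep_nonzero g, ?_⟩
      rw [he_image, ← preimage_lineRaw, Equiv.image_preimage, hw]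
      rfl
    · rintro ⟨a, haa, rfl⟩
      rw [he_image, image_lineRaw]
      show pt '' _ ∈ _
      apply (hlines' _).2
      refine ⟨Projectivization.mk (ZMod p) (transF a g.symm) (transF_ne_zero haa g.symm), ?_⟩
      rw [lineRaw_rep_eq]
  -- e maps px0 to x
  have hT2 : e px0 = x := by
    have h1 : projEquiv g px0 = x' := by
      rw [px0, projEquiv_mk, ← Projectivization.mk_rep x', Projectivization.mk_eq_mk_iff']
      exact ⟨1, by rw [one_smul]; exact hge0.symm⟩
    rw [he_apply, h1]
    exact ptE.apply_symm_apply x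
  -- e maps the line at infinity to L₀
  have hsingle2 : (Pi.single 2 1 : V3 (ZMod p)) ≠ 0 := by
    intro h
    have := congrFun h 2
    simp at this
  have hT3 : e '' lineRaw (Pi.single 2 1) = L₀ := by
    rw [he_image, image_lineRaw]
    have hd1 : transF (Pi.single 2 1) g.symm ⬝ᵥ u = 0 := by
      rw [dot_transF, (LinearEquiv.symm_apply_eq g).2 hge0.symm, dotProduct_single]
      simp
    have hd2 : transF (Pi.single 2 1) g.symm ⬝ᵥ u' = 0 := by
      rw [dot_transF, (LinearEquiv.symm_apply_eq g).2 hge1.symm, dotProduct_single]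
      simp
    obtain ⟨cc, hcc0, hcc⟩ := functional_unique hpair
      (transF_ne_zero hsingle2 g.symm) ha₀ hd2 hd1 hxu' hxu
    have : lineRaw (transF (Pi.single 2 1) g.symm) = lineRaw a₀ := by
      rw [hcc, lineRaw_smul hcc0]
    rw [this]
    exact hL₀eq.symm
  -- the conjugated permutation
  set τ : Equiv.Perm (PV (ZMod p)) := e.symm.permCongr σ with hτdef
  have hτ_apply : ∀ v, τ v = e.symm (σ (e v)) := by
    intro v
    rw [hτdef]
    simp [Equiv.permCongr_apply]
  have hτpow : ∀ (n : ℕ) (v), (τ ^ n) v = e.symm ((σ ^ n) (e v)) := by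
    intro n
    induction n with
    | zero => intro v; simp
    | succ n ih =>
      intro v
      rw [pow_succ, pow_succ, Equiv.Perm.mul_apply, Equiv.Perm.mul_apply, hτ_apply v, ih,
        Equiv.apply_symm_apply]
  -- hypotheses of mainPG
  have hτ1 : τ ≠ 1 := by
    intro h1
    have hσ1 : σ = 1 := by
      ext pp
      obtain ⟨v, rfl⟩ := e.surjective pp
      have := congrArg (fun f : Equiv.Perm (PV (ZMod p)) => f v) h1
      simp only [hτ_apply] at this
      have h2 := congrArg e this
      rw [Equiv.apply_symm_apply] at h2
      simpa using h2
    rw [hσ1, orderOf_one] at hord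
    exact (Fact.out : p.Prime).one_lt.ne hord
  have Hauto : ∀ a : V3 (ZMod p), a ≠ 0 → ∃ a', a' ≠ 0 ∧ ⇑τ '' lineRaw a = lineRaw a' := by
    intro a haa
    have hl : e '' lineRaw a ∈ Lines := (hT1 _).2 ⟨a, haa, rfl⟩
    obtain ⟨a', ha', heq⟩ := (hT1 _).1 (hauto _ hl)
    refine ⟨a', ha', ?_⟩
    have hτfun : ⇑τ = ⇑e.symm ∘ ⇑σ ∘ ⇑e := funext hτ_apply
    rw [hτfun, Set.image_comp, Set.image_comp, heq, Equiv.symm_image_image]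
  have Hel1 : ∀ v : PV (ZMod p), v.rep 2 = 0 → τ v = v := by
    intro v hv
    have : e v ∈ L₀ := by
      rw [← hT3]
      exact ⟨v, mem_single_of_rep_two hv, rfl⟩
    rw [hτ_apply, hel1 _ this, Equiv.symm_apply_apply]
  have Hel2 : ∀ a : V3 (ZMod p), a ≠ 0 → px0 ∈ lineRaw a →
      ⇑τ '' lineRaw a = lineRaw a := by
    intro a haa hx0
    have hl : e '' lineRaw a ∈ Lines := (hT1 _).2 ⟨a, haa, rfl⟩
    have hxin : x ∈ e '' lineRaw a := by
      rw [← hT2]; exact ⟨px0, hx0, rfl⟩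
    have heq := hel2 _ hl hxin
    have hτfun : ⇑τ = ⇑e.symm ∘ ⇑σ ∘ ⇑e := funext hτ_apply
    rw [hτfun, Set.image_comp, Set.image_comp, heq, Equiv.symm_image_image]
  -- y and z are affine points
  have hyaff : (e.symm y).rep 2 ≠ 0 := by
    intro h
    apply hy
    rw [← hT3]
    exact ⟨e.symm y, mem_single_of_rep_two h, e.apply_symm_apply y⟩
  have hzaff : (e.symm z).rep 2 ≠ 0 := by
    intro h
    apply hz
    rw [← hT3]
    exact ⟨e.symm z, mem_single_of_rep_two h, e.apply_symm_apply z⟩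
  obtain ⟨qy, hqy⟩ := exists_affP hyaff
  obtain ⟨qz, hqz⟩ := exists_affP hzaff
  have Hnc : ∀ a : V3 (ZMod p), a ≠ 0 →
      ¬(px0 ∈ lineRaw a ∧ affP qy ∈ lineRaw a ∧ affP qz ∈ lineRaw a) := by
    rintro a haa ⟨h1, h2, h3⟩
    have hl : e '' lineRaw a ∈ Lines := (hT1 _).2 ⟨a, haa, rfl⟩
    refine hnc _ hl ⟨?_, ?_, ?_⟩
    · rw [← hT2]; exact ⟨px0, h1, rfl⟩
    · have : e (affP qy) = y := by rw [hqy]; exact e.apply_symm_apply y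
      rw [← this]; exact ⟨affP qy, h2, rfl⟩
    · have : e (affP qz) = z := by rw [hqz]; exact e.apply_symm_apply z
      rw [← this]; exact ⟨affP qz, h3, rfl⟩
  -- transported incidence data
  set N' : ZMod p → Set (PV (ZMod p)) := fun i => e ⁻¹' (N i) with hN'def
  have hNimg : ∀ i : ZMod p, ∃ a, a ≠ 0 ∧ N' i = lineRaw a := by
    intro i
    obtain ⟨a, haa, heq⟩ := (hT1 (N i)).1 (hN i).1
    refine ⟨a, haa, ?_⟩
    show e ⁻¹' (N i) = lineRaw a
    rw [heq, Equiv.preimage_image]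
  have hN'full : ∀ i : ZMod p, (∃ a, a ≠ 0 ∧ N' i = lineRaw a) ∧ affP qy ∈ N' i ∧
      (τ ^ i.val) (affP qz) ∈ N' i := by
    intro i
    refine ⟨hNimg i, ?_, ?_⟩
    · show e (affP qy) ∈ N i
      rw [hqy, e.apply_symm_apply]
      exact (hN i).2.1
    · show e ((τ ^ i.val) (affP qz)) ∈ N i
      rw [hτpow, e.apply_symm_apply, hqz, e.apply_symm_apply]
      exact (hN i).2.2
  set Y' : ZMod p → PV (ZMod p) := fun i => e.symm (Y i) with hY'def
  have hY'full : ∀ i : ZMod p, Y' i ∈ N' 0 ∧ (τ ^ i.val) (Y' i) ∈ N' 1 := by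
    intro i
    constructor
    · show e (e.symm (Y i)) ∈ N 0
      rw [e.apply_symm_apply]
      exact (hY i).1
    · show e ((τ ^ i.val) (e.symm (Y i))) ∈ N 1
      rw [hτpow, e.apply_symm_apply, e.apply_symm_apply]
      exact (hY i).2
  have hEfull : ∀ i j : ZMod p, (τ ^ (E i j).val) (Y' i) ∈ N' j := by
    intro i j
    show e ((τ ^ (E i j).val) (e.symm (Y i))) ∈ N j
    rw [hτpow, e.apply_symm_apply, e.apply_symm_apply]
    exact hE i j
  exact mainPG τ hτ1 Hauto Hel1 Hel2 qy qz Hnc N' hN'full Y' hY'full E hEfull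
end

section
/- If there exists a fully normalized Butson–Hadamard matrix of type (p,p) that is not the Fourier matrix (ξ_p^{ij}), then there exists a non-Desarguesian projective plane of order p. -/
open Finset Polynomial

lemma BH14fiber (p : ℕ) [NeZero p] (hp : p.Prime) (d : ZMod p → ZMod p)
    (h : ∑ k, Complex.exp (2 * Real.pi * Complex.I / p) ^ (d k).val = 0) :
    Function.Bijective d := by
  haveI : Fact p.Prime := ⟨hp⟩
  set ζ : ℂ := Complex.exp (2 * Real.pi * Complex.I / p) with hζdef
  have hζ : IsPrimitiveRoot ζ p := Complex.isPrimitiveRoot_exp p hp.ne_zero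
  classical
  set n : ZMod p → ℕ := fun a => (univ.filter fun k => d k = a).card with hn
  -- fiberwise sum
  have hsum : ∑ a : ZMod p, (n a : ℂ) * ζ ^ a.val = 0 := by
    have hfib := Finset.sum_fiberwise (s := univ) (g := d) (f := fun k => ζ ^ (d k).val)
    rw [← h, ← hfib]
    refine Finset.sum_congr rfl fun a _ => ?_
    rw [Finset.sum_congr rfl (fun k hk => by
      rw [(Finset.mem_filter.mp hk).2]), Finset.sum_const, nsmul_eq_mul]
  -- the polynomial
  set P : ℚ[X] := ∑ a : ZMod p, C ((n a : ℚ)) * X ^ a.val with hP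
  have haeval : aeval ζ P = 0 := by
    rw [hP, map_sum]
    rw [← hsum]
    refine Finset.sum_congr rfl fun a _ => ?_
    simp [hζdef]
  have hco : ∀ a : ZMod p, P.coeff a.val = (n a : ℚ) := by
    intro a
    rw [hP, Polynomial.finset_sum_coeff]
    rw [Finset.sum_eq_single a]
    · simp [coeff_X_pow]
    · intro b _ hba
      have : a.val ≠ b.val := fun hh => hba (ZMod.val_injective p hh).symm
      simp [coeff_X_pow, this]
    · simp
  have hdeg : P.natDegree ≤ p - 1 := by
    refine Polynomial.natDegree_sum_le_of_forall_le _ _ fun a _ => ?_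
    exact le_trans (Polynomial.natDegree_C_mul_X_pow_le _ _)
      (Nat.le_sub_one_of_lt (ZMod.val_lt a))
  have hdvd : minpoly ℚ ζ ∣ P := minpoly.dvd _ _ haeval
  rw [← Polynomial.cyclotomic_eq_minpoly_rat hζ hp.pos] at hdvd
  obtain ⟨Q, hQ⟩ := hdvd
  have hcycdeg : (cyclotomic p ℚ).natDegree = p - 1 := by
    rw [Polynomial.natDegree_cyclotomic, Nat.totient_prime hp]
  have hsumcard : ∑ a : ZMod p, n a = p := by
    have := Finset.card_eq_sum_card_fiberwise
      (f := d) (s := univ) (t := univ) (fun x _ => Finset.mem_univ _)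
    simpa [ZMod.card] using this.symm
  have hQ0 : Q ≠ 0 := by
    rintro rfl
    rw [mul_zero] at hQ
    have : ∀ a : ZMod p, n a = 0 := by
      intro a
      have := hco a
      rw [hQ] at this
      simpa using this.symm
    rw [Finset.sum_congr rfl (fun a _ => this a), Finset.sum_const] at hsumcard
    simp at hsumcard
    exact hp.ne_zero hsumcard.symm
  have hP0 : P ≠ 0 := by
    rw [hQ]
    exact mul_ne_zero (Polynomial.cyclotomic_ne_zero p ℚ) hQ0
  have hQdeg : Q.natDegree = 0 := by
    have := Polynomial.natDegree_mul (Polynomial.cyclotomic_ne_zero p ℚ) hQ0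
    rw [← hQ, hcycdeg] at this
    omega
  obtain ⟨q, hq⟩ := Polynomial.natDegree_eq_zero.mp hQdeg
  have hcoeff1 : ∀ a : ZMod p, (n a : ℚ) = q := by
    intro a
    rw [← hco a, hQ, ← hq, Polynomial.coeff_mul_C,
      Polynomial.cyclotomic_prime ℚ p]
    rw [Polynomial.finset_sum_coeff]
    rw [Finset.sum_congr rfl (fun i _ => Polynomial.coeff_X_pow i a.val)]
    rw [Finset.sum_ite_eq (Finset.range p) a.val (fun _ => (1:ℚ))]
    simp [ZMod.val_lt a]
  have hnone : ∀ a : ZMod p, n a = 1 := by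
    have hall : ∀ a : ZMod p, n a = n 0 := by
      intro a
      have := (hcoeff1 a).trans (hcoeff1 0).symm
      exact_mod_cast this
    have : p * n 0 = p := by
      rw [Finset.sum_congr rfl (fun a _ => hall a), Finset.sum_const,
        Finset.card_univ, ZMod.card, smul_eq_mul] at hsumcard
      exact hsumcard
    have h1 : n 0 = 1 := by
      have := Nat.eq_of_mul_eq_mul_left hp.pos (this.trans (mul_one p).symm)
      exact this
    intro a; rw [hall a, h1]
  rw [Function.bijective_iff_existsUnique]
  intro b
  obtain ⟨k, hk⟩ := Finset.card_eq_one.mp (hnone b)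
  refine ⟨k, ?_, ?_⟩
  · have : k ∈ univ.filter fun k => d k = b := hk ▸ Finset.mem_singleton_self k
    exact (Finset.mem_filter.mp this).2
  · intro y hy
    have : y ∈ univ.filter fun k => d k = b := Finset.mem_filter.mpr ⟨Finset.mem_univ _, hy⟩
    rw [hk] at this
    exact Finset.mem_singleton.mp this


lemma BH14zpow (p : ℕ) [NeZero p] (ζ : ℂ) (hζp : ζ ^ p = 1) (hζ0 : ζ ≠ 0)
    (a b : ZMod p) : ζ ^ a.val * (ζ ^ b.val)⁻¹ = ζ ^ (a - b).val := by
  have hz : ∀ m : ℤ, (p : ℤ) ∣ m → ζ ^ m = 1 := by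
    rintro m ⟨c, rfl⟩
    rw [zpow_mul, zpow_natCast, hζp, one_zpow]
  have key : ζ ^ ((a.val : ℤ) - b.val) = ζ ^ (((a - b).val : ℤ)) := by
    have hdvd : (p : ℤ) ∣ ((a.val : ℤ) - b.val) - ((a - b).val : ℤ) := by
      have : ((((a.val : ℤ) - b.val) - ((a - b).val : ℤ) : ℤ) : ZMod p) = 0 := by
        push_cast
        rw [ZMod.natCast_val, ZMod.natCast_val, ZMod.natCast_val]
        simp [ZMod.cast_id]
      exact (ZMod.intCast_zmod_eq_zero_iff_dvd _ p).mp this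
    obtain ⟨c, hc⟩ := hdvd
    have : (a.val : ℤ) - b.val = ((a - b).val : ℤ) + p * c := by linarith
    rw [this, zpow_add₀ hζ0, hz _ ⟨c, rfl⟩, mul_one]
  calc ζ ^ a.val * (ζ ^ b.val)⁻¹ = ζ ^ ((a.val : ℤ) - b.val) := by
        rw [zpow_sub₀ hζ0, zpow_natCast, zpow_natCast, div_eq_mul_inv]
      _ = ζ ^ (a - b).val := by rw [key, zpow_natCast]

lemma BH14diffbij (p : ℕ) [NeZero p] (hp : p.Prime)
    (E : Matrix (ZMod p) (ZMod p) (ZMod p))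
    (H : Matrix (ZMod p) (ZMod p) ℂ)
    (hH : ∀ i j, H i j = Complex.exp (2 * Real.pi * Complex.I / p) ^ (E i j).val)
    (hBH : H * H.conjTranspose = (p : ℂ) • 1)
    {i j : ZMod p} (hij : i ≠ j) :
    Function.Bijective (fun x => E i x - E j x) := by
  set ζ : ℂ := Complex.exp (2 * Real.pi * Complex.I / p) with hζdef
  have hζ : IsPrimitiveRoot ζ p := Complex.isPrimitiveRoot_exp p hp.ne_zero
  have hζp : ζ ^ p = 1 := hζ.pow_eq_one
  have hζ0 : ζ ≠ 0 := Complex.exp_ne_zero _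
  have hstar : ∀ m : ℕ, star (ζ ^ m) = (ζ ^ m)⁻¹ := by
    intro m
    have hnorm : ‖ζ ^ m‖ = 1 := by
      rw [norm_pow, Complex.norm_eq_one_of_pow_eq_one hζp hp.ne_zero, one_pow]
    have := Complex.mul_conj (ζ ^ m)
    rw [Complex.normSq_eq_norm_sq, hnorm] at this
    have hne : ζ ^ m ≠ 0 := pow_ne_zero _ hζ0
    field_simp at this ⊢
    have this' : ζ ^ m * star (ζ ^ m) = 1 := by exact_mod_cast this
    linear_combination this'
  have h0 : ∑ k, ζ ^ ((E i k - E j k).val) = 0 := by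
    have hentry := congrFun (congrFun hBH i) j
    rw [Matrix.mul_apply] at hentry
    have hrhs : ((p : ℂ) • (1 : Matrix (ZMod p) (ZMod p) ℂ)) i j = 0 := by
      rw [Matrix.smul_apply, Matrix.one_apply_ne hij, smul_zero]
    rw [hrhs] at hentry
    rw [← hentry]
    refine Finset.sum_congr rfl fun k _ => ?_
    rw [Matrix.conjTranspose_apply, hH, hH, hstar, BH14zpow p ζ hζp hζ0]
  exact BH14fiber p hp _ h0


section BH14

variable (p : ℕ) [NeZero p] (E : Matrix (ZMod p) (ZMod p) (ZMod p))

abbrev BH14Pt := (ZMod p × ZMod p) ⊕ (Option (ZMod p))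

def BH14lc (i c : ZMod p) : Set (BH14Pt p) :=
  insert (Sum.inr (some i)) (Set.range fun x => Sum.inl (x, E i x + c))

def BH14vert (a : ZMod p) : Set (BH14Pt p) :=
  insert (Sum.inr none) (Set.range fun y : ZMod p => Sum.inl (a, y))

def BH14linf : Set (BH14Pt p) := Set.range Sum.inr

abbrev BH14Idx := (ZMod p × ZMod p) ⊕ ((ZMod p) ⊕ Unit)

def BH14line : BH14Idx p → Set (BH14Pt p)
  | .inl (i, c) => BH14lc p E i c
  | .inr (.inl a) => BH14vert p a
  | .inr (.inr _) => BH14linf p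

noncomputable def BH14Lines : Finset (Set (BH14Pt p)) :=
  @Finset.image _ _ (Classical.decEq _) (BH14line p E) Finset.univ

variable {p E}

@[simp] lemma BH14mem_lc_inl {x y i c : ZMod p} :
    Sum.inl (x, y) ∈ BH14lc p E i c ↔ y = E i x + c := by
  simp only [BH14lc, Set.mem_insert_iff, Set.mem_range]
  constructor
  · rintro (h | ⟨x', h⟩)
    · simp at h
    · have h2 : x' = x ∧ E i x' + c = y := by simpa using h
      rcases h2 with ⟨rfl, h2⟩
      exact h2.symm
  · rintro rfl
    exact Or.inr ⟨x, rfl⟩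

@[simp] lemma BH14mem_lc_inr {t : Option (ZMod p)} {i c : ZMod p} :
    Sum.inr t ∈ BH14lc p E i c ↔ t = some i := by
  simp only [BH14lc, Set.mem_insert_iff, Set.mem_range]
  constructor
  · rintro (h | ⟨x', h⟩)
    · simpa using h
    · simp at h
  · rintro rfl
    exact Or.inl rfl

@[simp] lemma BH14mem_vert_inl {x y a : ZMod p} :
    Sum.inl (x, y) ∈ BH14vert p a ↔ x = a := by
  simp only [BH14vert, Set.mem_insert_iff, Set.mem_range]
  constructor
  · rintro (h | ⟨y', h⟩)
    · simp at h
    · have h2 : a = x ∧ y' = y := by simpa using h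
      exact h2.1.symm
  · rintro rfl
    exact Or.inr ⟨y, rfl⟩

@[simp] lemma BH14mem_vert_inr {t : Option (ZMod p)} {a : ZMod p} :
    Sum.inr t ∈ BH14vert p a ↔ t = none := by
  simp only [BH14vert, Set.mem_insert_iff, Set.mem_range]
  constructor
  · rintro (h | ⟨y', h⟩)
    · simpa using h
    · simp at h
  · rintro rfl
    exact Or.inl rfl

@[simp] lemma BH14mem_linf_inl {s : ZMod p × ZMod p} :
    Sum.inl s ∉ BH14linf p := by
  simp only [BH14linf, Set.mem_range]
  rintro ⟨t, h⟩
  simp at h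

@[simp] lemma BH14mem_linf_inr {t : Option (ZMod p)} :
    Sum.inr t ∈ BH14linf p := ⟨t, rfl⟩


lemma BH14line_inj (hE0 : ∀ i : ZMod p, E i 0 = 0) :
    Function.Injective (BH14line p E) := by
  have hp1 : (1 : ZMod p) ≠ 0 ∨ True := Or.inr trivial
  intro a b hab
  match a, b with
  | .inl (i, c), .inl (i', c') =>
    have h1 : Sum.inr (some i) ∈ BH14line p E (.inl (i', c')) := by
      rw [← hab]; simp [BH14line]
    have h2 : i = i' := by simpa [BH14line] using h1
    subst h2
    have h3 : (Sum.inl (0, c) : BH14Pt p) ∈ BH14line p E (.inl (i, c')) := by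
      rw [← hab]; simp [BH14line, hE0]
    have h4 : c = c' := by simpa [BH14line, hE0] using h3
    rw [h4]
  | .inl (i, c), .inr (.inl a) =>
    exfalso
    have h1 : (Sum.inr none : BH14Pt p) ∈ BH14line p E (.inl (i, c)) := by
      rw [hab]; simp [BH14line]
    simpa [BH14line] using h1
  | .inl (i, c), .inr (.inr _) =>
    exfalso
    have h1 : (Sum.inl (0, c) : BH14Pt p) ∈ BH14line p E (.inr (.inr ())) := by
      rw [← hab]; simp [BH14line, hE0]
    simpa [BH14line] using h1
  | .inr (.inl a), .inl (i, c) =>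
    exfalso
    have h1 : (Sum.inr none : BH14Pt p) ∈ BH14line p E (.inl (i, c)) := by
      rw [← hab]; simp [BH14line]
    simpa [BH14line] using h1
  | .inr (.inl a), .inr (.inl a') =>
    have h1 : (Sum.inl (a, 0) : BH14Pt p) ∈ BH14line p E (.inr (.inl a')) := by
      rw [← hab]; simp [BH14line]
    have : a = a' := by simpa [BH14line] using h1
    rw [this]
  | .inr (.inl a), .inr (.inr _) =>
    exfalso
    have h1 : (Sum.inl (a, 0) : BH14Pt p) ∈ BH14line p E (.inr (.inr ())) := by
      rw [← hab]; simp [BH14line]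
    simpa [BH14line] using h1
  | .inr (.inr _), .inl (i, c) =>
    exfalso
    have h1 : (Sum.inl (0, c) : BH14Pt p) ∈ BH14line p E (.inr (.inr ())) := by
      rw [hab]; simp [BH14line, hE0]
    simpa [BH14line] using h1
  | .inr (.inr _), .inr (.inl a) =>
    exfalso
    have h1 : (Sum.inl (a, 0) : BH14Pt p) ∈ BH14line p E (.inr (.inr ())) := by
      rw [hab]; simp [BH14line]
    simpa [BH14line] using h1
  | .inr (.inr _), .inr (.inr _) => rfl

lemma BH14ncard_line (idx : BH14Idx p) : (BH14line p E idx).ncard = p + 1 := by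
  have hZcard : (Set.univ : Set (ZMod p)).ncard = p := by
    rw [Set.ncard_univ, Nat.card_zmod]
  match idx with
  | .inl (i, c) =>
    show (BH14lc p E i c).ncard = p + 1
    rw [BH14lc, Set.ncard_insert_of_notMem (by simp) (Set.finite_range _)]
    rw [← Set.image_univ, Set.ncard_image_of_injective _ (fun x y hxy => by
      simpa using (Prod.mk.injEq .. ▸ (by simpa using hxy : (x, E i x + c) = (y, E i y + c))).1),
      hZcard]
  | .inr (.inl a) =>
    show (BH14vert p a).ncard = p + 1
    rw [BH14vert, Set.ncard_insert_of_notMem (by simp) (Set.finite_range _)]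
    rw [← Set.image_univ, Set.ncard_image_of_injective _ (fun x y hxy => by
      simpa using hxy), hZcard]
  | .inr (.inr _) =>
    show (BH14linf p).ncard = p + 1
    rw [BH14linf, ← Set.image_univ,
      Set.ncard_image_of_injective _ Sum.inr_injective, Set.ncard_univ]
    rw [Nat.card_eq_fintype_card, Fintype.card_option, ZMod.card]


lemma BH14inter (hE0 : ∀ i : ZMod p, E i 0 = 0)
    (hbij : ∀ i j : ZMod p, i ≠ j → Function.Bijective (fun x => E i x - E j x)) :
    ∀ a b : BH14Idx p, BH14line p E a ≠ BH14line p E b →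
      (BH14line p E a ∩ BH14line p E b).ncard = 1 := by
  have key : ∀ a b : BH14Idx p, BH14line p E a ≠ BH14line p E b →
      ∃ z, BH14line p E a ∩ BH14line p E b = {z} := by
    intro a b hab
    match a, b with
    | .inl (i, c), .inl (i', c') =>
      by_cases hii : i = i'
      · subst hii
        have hcc : c ≠ c' := fun h => hab (by rw [h])
        refine ⟨Sum.inr (some i), ?_⟩
        ext r
        rcases r with ⟨x, y⟩ | t
        · simp only [Set.mem_inter_iff, Set.mem_singleton_iff, BH14mem_lc_inl, BH14line]
          constructor
          · rintro ⟨rfl, h2⟩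
            exact absurd (add_left_cancel h2) hcc
          · intro h; simp at h
        · simp only [Set.mem_inter_iff, Set.mem_singleton_iff, BH14mem_lc_inr, BH14line]
          constructor
          · rintro ⟨rfl, -⟩; rfl
          · rintro h
            have : t = some i := by simpa using h
            exact ⟨this, this⟩
      · obtain ⟨x0, hx0⟩ := (hbij i i' hii).2 (c' - c)
        simp only at hx0
        refine ⟨Sum.inl (x0, E i x0 + c), ?_⟩
        ext r
        rcases r with ⟨x, y⟩ | t
        · simp only [Set.mem_inter_iff, Set.mem_singleton_iff, BH14mem_lc_inl, BH14line,
            Sum.inl.injEq, Prod.mk.injEq]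
          constructor
          · rintro ⟨rfl, h2⟩
            have hx : E i x - E i' x = c' - c := by
              linear_combination h2
            have : x = x0 := (hbij i i' hii).1 (by
              show E i x - E i' x = E i x0 - E i' x0
              rw [hx0]; exact hx)
            subst this
            exact ⟨rfl, rfl⟩
          · rintro ⟨rfl, rfl⟩
            refine ⟨rfl, ?_⟩
            linear_combination hx0
        · simp only [Set.mem_inter_iff, Set.mem_singleton_iff, BH14mem_lc_inr, BH14line]
          constructor
          · rintro ⟨rfl, h⟩
            exact absurd (by simpa using h) hii
          · intro h; simp at h
    | .inl (i, c), .inr (.inl a) =>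
      refine ⟨Sum.inl (a, E i a + c), ?_⟩
      ext r
      rcases r with ⟨x, y⟩ | t
      · simp only [Set.mem_inter_iff, Set.mem_singleton_iff, BH14mem_lc_inl, BH14mem_vert_inl,
          BH14line, Sum.inl.injEq, Prod.mk.injEq]
        constructor
        · rintro ⟨rfl, rfl⟩; exact ⟨rfl, rfl⟩
        · rintro ⟨rfl, rfl⟩; exact ⟨rfl, rfl⟩
      · simp only [Set.mem_inter_iff, Set.mem_singleton_iff, BH14line, BH14mem_lc_inr,
          BH14mem_vert_inr]
        constructor
        · rintro ⟨rfl, h⟩; simp at h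
        · intro h; simp at h
    | .inl (i, c), .inr (.inr _) =>
      refine ⟨Sum.inr (some i), ?_⟩
      ext r
      rcases r with ⟨x, y⟩ | t
      · simp [BH14line]
      · simp [BH14line]
    | .inr (.inl a), .inl (i, c) =>
      refine ⟨Sum.inl (a, E i a + c), ?_⟩
      ext r
      rcases r with ⟨x, y⟩ | t
      · simp only [Set.mem_inter_iff, Set.mem_singleton_iff, BH14mem_lc_inl, BH14mem_vert_inl,
          BH14line, Sum.inl.injEq, Prod.mk.injEq]
        constructor
        · rintro ⟨rfl, rfl⟩; exact ⟨rfl, rfl⟩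
        · rintro ⟨rfl, rfl⟩; exact ⟨rfl, rfl⟩
      · simp only [Set.mem_inter_iff, Set.mem_singleton_iff, BH14line, BH14mem_lc_inr,
          BH14mem_vert_inr]
        constructor
        · rintro ⟨rfl, h⟩; simp at h
        · intro h; simp at h
    | .inr (.inl a), .inr (.inl a') =>
      have haa : a ≠ a' := fun h => hab (by rw [h])
      refine ⟨Sum.inr none, ?_⟩
      ext r
      rcases r with ⟨x, y⟩ | t
      · simp only [Set.mem_inter_iff, BH14mem_vert_inl, BH14line]
        constructor
        · rintro ⟨rfl, h⟩; exact absurd h haa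
        · intro h; simp at h
      · simp [BH14line]
    | .inr (.inl a), .inr (.inr _) =>
      refine ⟨Sum.inr none, ?_⟩
      ext r
      rcases r with ⟨x, y⟩ | t
      · simp [BH14line]
      · simp [BH14line]
    | .inr (.inr _), .inl (i, c) =>
      refine ⟨Sum.inr (some i), ?_⟩
      ext r
      rcases r with ⟨x, y⟩ | t
      · simp [BH14line]
      · simp [BH14line]
    | .inr (.inr _), .inr (.inl a) =>
      refine ⟨Sum.inr none, ?_⟩
      ext r
      rcases r with ⟨x, y⟩ | t
      · simp [BH14line]
      · simp [BH14line]
    | .inr (.inr _), .inr (.inr _) => exact absurd rfl hab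
  intro a b hab
  obtain ⟨z, hz⟩ := key a b hab
  rw [hz, Set.ncard_singleton]

end BH14
section BH14b

open Finset

def BH14dp {p : ℕ} (a b : Fin 3 → ZMod p) : ZMod p := ∑ k, a k * b k

lemma BH14dp_comm {p : ℕ} (a b : Fin 3 → ZMod p) : BH14dp a b = BH14dp b a := by
  unfold BH14dp
  exact Finset.sum_congr rfl fun k _ => mul_comm _ _

lemma BH14dp_basis {p : ℕ} [NeZero p] (B : Module.Basis (Fin 3) (ZMod p) (Fin 3 → ZMod p))
    (w b : Fin 3 → ZMod p) :
    BH14dp w b = ∑ j, B.repr b j * BH14dp w (B j) := by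
  conv_lhs => rw [← B.sum_repr b]
  unfold BH14dp
  simp only [Finset.sum_apply, Pi.smul_apply, smul_eq_mul, Finset.mul_sum]
  rw [Finset.sum_comm]
  exact Finset.sum_congr rfl fun j _ => Finset.sum_congr rfl fun k _ => by ring

lemma BH14linear (p : ℕ) [hpp : Fact p.Prime]
    (E : Matrix (ZMod p) (ZMod p) (ZMod p))
    (hnorm : ∀ i : ZMod p, E 0 i = 0 ∧ E i 0 = 0 ∧ E 1 i = i ∧ E i 1 = i)
    (pt : Projectivization (ZMod p) (Fin 3 → ZMod p) → BH14Pt p)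
    (hb : Function.Bijective pt)
    (hl : ∀ l : Set (BH14Pt p), l ∈ BH14Lines p E ↔
      ∃ w : Projectivization (ZMod p) (Fin 3 → ZMod p),
        l = pt '' {v | ∑ k, w.rep k * v.rep k = 0}) :
    ∀ i j : ZMod p, E i j = i * j := by
  haveI : NeZero p := ⟨hpp.out.ne_zero⟩
  classical
  let e := Equiv.ofBijective pt hb
  let φ : BH14Pt p → Projectivization (ZMod p) (Fin 3 → (ZMod p)) := e.symm
  have hφ : ∀ r, pt (φ r) = r := fun r => e.apply_symm_apply r
  have hφinj : Function.Injective φ := e.symm.injective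
  -- membership via functionals
  have hmem : ∀ l ∈ BH14Lines p E, ∃ w : Fin 3 → (ZMod p),
      ∀ r, r ∈ l ↔ BH14dp w (φ r).rep = 0 := by
    intro l hlmem
    obtain ⟨W, hW⟩ := (hl l).mp hlmem
    refine ⟨W.rep, fun r => ?_⟩
    rw [hW]
    constructor
    · rintro ⟨v, hv, hvr⟩
      have : v = φ r := e.injective (by simpa [e, Equiv.ofBijective] using hvr.trans (hφ r).symm)
      rw [← this]
      exact hv
    · intro h
      exact ⟨φ r, h, hφ r⟩
  -- converse: arbitrary functionals give lines
  have hrev : ∀ w : Fin 3 → (ZMod p), w ≠ 0 →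
      (pt '' {v | BH14dp w v.rep = 0}) ∈ BH14Lines p E := by
    intro w hw
    refine (hl _).mpr ⟨Projectivization.mk (ZMod p) w hw, ?_⟩
    have hset : {v : Projectivization (ZMod p) (Fin 3 → ZMod p) |
        ∑ k, (Projectivization.mk (ZMod p) w hw).rep k * v.rep k = 0} =
        {v : Projectivization (ZMod p) (Fin 3 → ZMod p) | BH14dp w v.rep = 0} := by
      ext v
      show (∑ k, (Projectivization.mk (ZMod p) w hw).rep k * v.rep k = 0) ↔
        BH14dp w v.rep = 0
      have hmk := Projectivization.mk_rep (Projectivization.mk (ZMod p) w hw)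
      rw [Projectivization.mk_eq_mk_iff] at hmk
      obtain ⟨a, ha⟩ := hmk
      rw [← ha]
      show (∑ k, ((a : (ZMod p)) • w) k * v.rep k = 0) ↔ BH14dp w v.rep = 0
      unfold BH14dp
      rw [show ∑ k, ((a : (ZMod p)) • w) k * v.rep k = (a : (ZMod p)) * ∑ k, w k * v.rep k by
        rw [Finset.mul_sum]; exact Finset.sum_congr rfl fun k _ => by simp [mul_assoc]]
      constructor
      · intro h
        rcases mul_eq_zero.mp h with h' | h'
        · exact absurd h' a.ne_zero
        · exact h'
      · intro h; rw [h, mul_zero]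
    rw [hset]
  -- the three base points
  set q1 := φ (Sum.inr (some 0)) with hq1def
  set q2 := φ (Sum.inr none) with hq2def
  set q3 := φ (Sum.inl (0, 0)) with hq3def
  set a : Fin 3 → (Fin 3 → (ZMod p)) := ![q1.rep, q2.rep, q3.rep] with hadef
  -- no functional kills all three
  have hno : ∀ w : Fin 3 → (ZMod p), w ≠ 0 →
      ¬(BH14dp w q1.rep = 0 ∧ BH14dp w q2.rep = 0 ∧ BH14dp w q3.rep = 0) := by
    rintro w hw ⟨h1, h2, h3⟩
    have hlmem := hrev w hw
    rw [BH14Lines, Finset.mem_image] at hlmem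
    obtain ⟨idx, -, hidx⟩ := hlmem
    have hmem1 : Sum.inr (some (0 : (ZMod p))) ∈ BH14line p E idx := by
      rw [hidx]; exact ⟨q1, h1, hφ _⟩
    have hmem2 : (Sum.inr none : BH14Pt p) ∈ BH14line p E idx := by
      rw [hidx]; exact ⟨q2, h2, hφ _⟩
    have hmem3 : (Sum.inl ((0 : (ZMod p)), (0 : (ZMod p))) : BH14Pt p) ∈ BH14line p E idx := by
      rw [hidx]; exact ⟨q3, h3, hφ _⟩
    match idx with
    | .inl (i, c) => simp [BH14line] at hmem2
    | .inr (.inl a') => simp [BH14line] at hmem1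
    | .inr (.inr _) => simp [BH14line] at hmem3
  -- linear independence
  have hli : LinearIndependent (ZMod p) a := by
    rw [Fintype.linearIndependent_iff]
    intro g hg
    by_contra hcon
    push_neg at hcon
    obtain ⟨i0, hi0⟩ := hcon
    set M : Matrix (Fin 3) (Fin 3) (ZMod p) := Matrix.of (fun i k => a i k) with hM
    have hvm : Matrix.vecMul g M = 0 := by
      funext k
      have := congrFun hg k
      simpa [Matrix.vecMul, dotProduct, M, Finset.sum_apply] using this
    have hdet : M.det = 0 := by
      rw [← Matrix.exists_vecMul_eq_zero_iff]
      exact ⟨g, fun h => hi0 (by rw [h]; rfl), hvm⟩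
    obtain ⟨w, hw0, hMw⟩ := Matrix.exists_mulVec_eq_zero_iff.mpr hdet
    refine hno w hw0 ⟨?_, ?_, ?_⟩
    · have := congrFun hMw 0
      rw [BH14dp_comm]
      simpa [Matrix.mulVec, dotProduct, M, BH14dp, a] using this
    · have := congrFun hMw 1
      rw [BH14dp_comm]
      simpa [Matrix.mulVec, dotProduct, M, BH14dp, a] using this
    · have := congrFun hMw 2
      rw [BH14dp_comm]
      simpa [Matrix.mulVec, dotProduct, M, BH14dp, a] using this
  have hcard : Fintype.card (Fin 3) = Module.finrank (ZMod p) (Fin 3 → (ZMod p)) := by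
    simp [Module.finrank_fin_fun]
  set B : Module.Basis (Fin 3) (ZMod p) (Fin 3 → (ZMod p)) := basisOfLinearIndependentOfCardEqFinrank hli hcard
    with hBdef
  have hB : ∀ i, B i = a i := fun i =>
    congrFun (coe_basisOfLinearIndependentOfCardEqFinrank hli hcard) i
  -- coordinates
  set κ : BH14Pt p → Fin 3 → (ZMod p) := fun r j => B.repr ((φ r).rep) j with hκdef
  have hexp : ∀ (w : Fin 3 → (ZMod p)) (r : BH14Pt p),
      BH14dp w (φ r).rep =
        κ r 0 * BH14dp w (B 0) + κ r 1 * BH14dp w (B 1) + κ r 2 * BH14dp w (B 2) := by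
    intro w r
    rw [BH14dp_basis B w]
    rw [Fin.sum_univ_three]
  -- coordinates of the base points
  have hrep : ∀ j, B.repr (B j) = Finsupp.single j 1 := fun j => B.repr_self j
  have hκq1 : κ (Sum.inr (some 0)) = fun j => if j = 0 then 1 else 0 := by
    funext j
    have h1 : (φ (Sum.inr (some (0:(ZMod p))))).rep = B 0 := by rw [hB 0]; rfl
    rw [hκdef]
    simp only [h1, hrep 0, Finsupp.single_apply]
    by_cases h : j = 0 <;> simp [h, eq_comm]
  have hκq2 : κ (Sum.inr none) = fun j => if j = 1 then 1 else 0 := by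
    funext j
    have h1 : (φ (Sum.inr none : BH14Pt p)).rep = B 1 := by rw [hB 1]; rfl
    rw [hκdef]
    simp only [h1, hrep 1, Finsupp.single_apply]
    by_cases h : j = 1 <;> simp [h, eq_comm]
  have hκq3 : κ (Sum.inl (0, 0)) = fun j => if j = 2 then 1 else 0 := by
    funext j
    have h1 : (φ (Sum.inl ((0:(ZMod p)), (0:(ZMod p))))).rep = B 2 := by rw [hB 2]; rfl
    rw [hκdef]
    simp only [h1, hrep 2, Finsupp.single_apply]
    by_cases h : j = 2 <;> simp [h, eq_comm]
  -- membership characterization per line index, in coordinates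
  have hLmem : ∀ idx : BH14Idx p, ∃ w : Fin 3 → ZMod p, ∀ r,
      r ∈ BH14line p E idx ↔
        κ r 0 * BH14dp w (B 0) + κ r 1 * BH14dp w (B 1) + κ r 2 * BH14dp w (B 2) = 0 := by
    intro idx
    have hmemL : BH14line p E idx ∈ BH14Lines p E := by
      rw [BH14Lines, Finset.mem_image]
      exact ⟨idx, Finset.mem_univ _, rfl⟩
    obtain ⟨w, hw⟩ := hmem _ hmemL
    exact ⟨w, fun r => by rw [hw r, hexp w r]⟩
  -- the line at infinity
  obtain ⟨winf, hwinf⟩ := hLmem (.inr (.inr ()))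
  have hWinf0 : BH14dp winf (B 0) = 0 := by
    have := (hwinf (Sum.inr (some 0))).mp (by simp [BH14line])
    rw [hκq1] at this
    simpa using this
  have hWinf1 : BH14dp winf (B 1) = 0 := by
    have := (hwinf (Sum.inr none)).mp (by simp [BH14line])
    rw [hκq2] at this
    simpa using this
  have hWinf2 : BH14dp winf (B 2) ≠ 0 := by
    intro h0
    have : (Sum.inl ((0:ZMod p), (0:ZMod p)) : BH14Pt p) ∈ BH14line p E (.inr (.inr ())) :=
      (hwinf _).mpr (by rw [hκq3, hWinf0, hWinf1, h0]; ring)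
    simpa [BH14line] using this
  have hκ2 : ∀ s : ZMod p × ZMod p, κ (Sum.inl s) 2 ≠ 0 := by
    intro s h2
    have : (Sum.inl s : BH14Pt p) ∈ BH14line p E (.inr (.inr ())) :=
      (hwinf _).mpr (by rw [hWinf0, hWinf1, h2]; ring)
    simpa [BH14line] using this
  have hκinf2 : ∀ t : Option (ZMod p), κ (Sum.inr t) 2 = 0 := by
    intro t
    have := (hwinf (Sum.inr t)).mp (by simp [BH14line])
    rw [hWinf0, hWinf1] at this
    have h2 : κ (Sum.inr t) 2 * BH14dp winf (B 2) = 0 := by linear_combination this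
    rcases mul_eq_zero.mp h2 with h | h
    · exact h
    · exact absurd h hWinf2
  -- affine coordinate functions
  set uf : ZMod p → ZMod p :=
    fun x => κ (Sum.inl (x, 0)) 0 / κ (Sum.inl (x, 0)) 2 with hufdef
  set vf : ZMod p → ZMod p :=
    fun y => κ (Sum.inl (0, y)) 1 / κ (Sum.inl (0, y)) 2 with hvfdef
  -- vertical lines: first ratio depends only on x
  have hvert : ∀ a' y : ZMod p,
      κ (Sum.inl (a', y)) 0 / κ (Sum.inl (a', y)) 2 = uf a' := by
    have key : ∀ a' : ZMod p, ∃ t : ZMod p, ∀ y : ZMod p,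
        κ (Sum.inl (a', y)) 0 / κ (Sum.inl (a', y)) 2 = t := by
      intro a'
      obtain ⟨w, hw⟩ := hLmem (.inr (.inl a'))
      have hW1 : BH14dp w (B 1) = 0 := by
        have := (hw (Sum.inr none)).mp (by simp [BH14line])
        rw [hκq2] at this
        simpa using this
      have hW0 : BH14dp w (B 0) ≠ 0 := by
        intro h0
        have hW2 : BH14dp w (B 2) = 0 := by
          have := (hw (Sum.inl (a', 0))).mp (by simp [BH14line])
          rw [h0, hW1] at this
          have h2 : κ (Sum.inl (a', 0)) 2 * BH14dp w (B 2) = 0 := by linear_combination this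
          rcases mul_eq_zero.mp h2 with h | h
          · exact absurd h (hκ2 _)
          · exact h
        have : (Sum.inr (some (0:ZMod p)) : BH14Pt p) ∈ BH14line p E (.inr (.inl a')) :=
          (hw _).mpr (by rw [h0, hW1, hW2]; ring)
        simpa [BH14line] using this
      refine ⟨-(BH14dp w (B 2)) / BH14dp w (B 0), fun y => ?_⟩
      have heq := (hw (Sum.inl (a', y))).mp (by simp [BH14line])
      rw [hW1] at heq
      have h2 := hκ2 (a', y)
      field_simp
      linear_combination heq
    intro a' y
    obtain ⟨t, ht⟩ := key a'
    rw [ht y, hufdef]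
    simp only
    rw [ht 0]
  -- horizontal lines: second ratio depends only on y
  have hhor : ∀ c x : ZMod p,
      κ (Sum.inl (x, c)) 1 / κ (Sum.inl (x, c)) 2 = vf c := by
    have key : ∀ c : ZMod p, ∃ t : ZMod p, ∀ x : ZMod p,
        κ (Sum.inl (x, c)) 1 / κ (Sum.inl (x, c)) 2 = t := by
      intro c
      obtain ⟨w, hw⟩ := hLmem (.inl (0, c))
      have hW0 : BH14dp w (B 0) = 0 := by
        have := (hw (Sum.inr (some 0))).mp (by simp [BH14line])
        rw [hκq1] at this
        simpa using this
      have hW1 : BH14dp w (B 1) ≠ 0 := by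
        intro h1
        have hW2 : BH14dp w (B 2) = 0 := by
          have := (hw (Sum.inl (0, c))).mp (by simp [BH14line, (hnorm 0).2.1])
          rw [hW0, h1] at this
          have h2 : κ (Sum.inl ((0:ZMod p), c)) 2 * BH14dp w (B 2) = 0 := by
            linear_combination this
          rcases mul_eq_zero.mp h2 with h | h
          · exact absurd h (hκ2 _)
          · exact h
        have : (Sum.inr none : BH14Pt p) ∈ BH14line p E (.inl (0, c)) :=
          (hw _).mpr (by rw [hW0, h1, hW2]; ring)
        simpa [BH14line] using this
      refine ⟨-(BH14dp w (B 2)) / BH14dp w (B 1), fun x => ?_⟩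
      have heq := (hw (Sum.inl (x, c))).mp (by simp [BH14line, (hnorm x).1])
      rw [hW0] at heq
      have h2 := hκ2 (x, c)
      field_simp
      linear_combination heq
    intro c x
    obtain ⟨t, ht⟩ := key c
    rw [ht x, hvfdef]
    simp only
    rw [ht 0]
  -- base values
  have hu0 : uf 0 = 0 := by
    rw [hufdef]
    simp only
    rw [hκq3]
    simp [Fin.ext_iff]
  have hv0 : vf 0 = 0 := by
    rw [hvfdef]
    simp only
    rw [hκq3]
    simp [Fin.ext_iff]
  -- vf 1 ≠ 0
  have hv1 : vf 1 ≠ 0 := by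
    intro hv
    have h2 := hκ2 ((0:ZMod p), 1)
    have hκ1 : κ (Sum.inl ((0:ZMod p), 1)) 1 = 0 := by
      have := hv
      rw [hvfdef] at this
      simp only at this
      rcases div_eq_zero_iff.mp this with h | h
      · exact h
      · exact absurd h h2
    have hκ0 : κ (Sum.inl ((0:ZMod p), 1)) 0 = 0 := by
      have := hvert 0 1
      rw [hu0] at this
      rcases div_eq_zero_iff.mp this with h | h
      · exact h
      · exact absurd h h2
    have hrepr : (φ (Sum.inl ((0:ZMod p), (1:ZMod p)))).rep =
        κ (Sum.inl ((0:ZMod p), 1)) 2 • B 2 := by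
      conv_lhs => rw [← B.sum_repr ((φ (Sum.inl ((0:ZMod p), (1:ZMod p)))).rep)]
      rw [Fin.sum_univ_three]
      have e0 : B.repr ((φ (Sum.inl ((0:ZMod p), (1:ZMod p)))).rep) 0 = 0 := hκ0
      have e1 : B.repr ((φ (Sum.inl ((0:ZMod p), (1:ZMod p)))).rep) 1 = 0 := hκ1
      rw [e0, e1, zero_smul, zero_smul, zero_add, zero_add]
    have hφeq : φ (Sum.inl ((0:ZMod p), (1:ZMod p))) = q3 := by
      have hm1 := Projectivization.mk_rep (φ (Sum.inl ((0:ZMod p), (1:ZMod p))))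
      have hm3 := Projectivization.mk_rep q3
      rw [← hm1, ← hm3]
      have hq3rep : q3.rep = B 2 := (hB 2).symm
      rw [Projectivization.mk_eq_mk_iff]
      refine ⟨Units.mk0 (κ (Sum.inl ((0:ZMod p), 1)) 2) h2, ?_⟩
      rw [hrepr, hq3rep]
      simp [Units.smul_def]
    have := hφinj (hφeq.trans hq3def)
    have : (1 : ZMod p) = 0 := by
      have h' : ((0:ZMod p), (1:ZMod p)) = ((0:ZMod p), (0:ZMod p)) := by
        injection this
      exact (Prod.mk.injEq _ _ _ _ ▸ h').2
    exact one_ne_zero this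
  -- the slope of each parallel class
  have hclass : ∀ i : ZMod p, i ≠ 0 → ∃ σ : ZMod p, ∀ c x : ZMod p,
      vf (E i x + c) = vf c + σ * uf x := by
    intro i hi
    have hd2 : κ (Sum.inr (some i)) 2 = 0 := hκinf2 _
    have hd0 : κ (Sum.inr (some i)) 0 ≠ 0 := by
      intro h0
      have hd1 : κ (Sum.inr (some i)) 1 ≠ 0 := by
        intro h1
        have : (φ (Sum.inr (some i))).rep = 0 := by
          conv_lhs => rw [← B.sum_repr ((φ (Sum.inr (some i))).rep)]
          rw [Fin.sum_univ_three]
          have e0 : B.repr ((φ (Sum.inr (some i))).rep) 0 = 0 := h0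
          have e1 : B.repr ((φ (Sum.inr (some i))).rep) 1 = 0 := h1
          have e2 : B.repr ((φ (Sum.inr (some i))).rep) 2 = 0 := hd2
          rw [e0, e1, e2]
          simp
        exact (φ (Sum.inr (some i))).rep_nonzero this
      have hrepr : (φ (Sum.inr (some i))).rep = κ (Sum.inr (some i)) 1 • B 1 := by
        conv_lhs => rw [← B.sum_repr ((φ (Sum.inr (some i))).rep)]
        rw [Fin.sum_univ_three]
        have e0 : B.repr ((φ (Sum.inr (some i))).rep) 0 = 0 := h0
        have e2 : B.repr ((φ (Sum.inr (some i))).rep) 2 = 0 := hd2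
        rw [e0, e2, zero_smul, zero_smul, zero_add, add_zero]
      have hφeq : φ (Sum.inr (some i)) = q2 := by
        have hm1 := Projectivization.mk_rep (φ (Sum.inr (some i)))
        have hm2 := Projectivization.mk_rep q2
        rw [← hm1, ← hm2]
        rw [Projectivization.mk_eq_mk_iff]
        refine ⟨Units.mk0 _ hd1, ?_⟩
        have hq2rep : q2.rep = B 1 := (hB 1).symm
        rw [hrepr, hq2rep]
        simp [Units.smul_def]
      have := hφinj (hφeq.trans hq2def)
      simp at this
    refine ⟨κ (Sum.inr (some i)) 1 / κ (Sum.inr (some i)) 0, fun c x => ?_⟩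
    obtain ⟨w, hw⟩ := hLmem (.inl (i, c))
    have hrel := (hw (Sum.inr (some i))).mp (by simp [BH14line])
    rw [hd2] at hrel
    have hW1 : BH14dp w (B 1) ≠ 0 := by
      intro h1
      have hW0 : BH14dp w (B 0) = 0 := by
        rw [h1] at hrel
        have h2 : κ (Sum.inr (some i)) 0 * BH14dp w (B 0) = 0 := by linear_combination hrel
        rcases mul_eq_zero.mp h2 with h | h
        · exact absurd h hd0
        · exact h
      have hW2 : BH14dp w (B 2) = 0 := by
        have := (hw (Sum.inl (0, c))).mp (by simp [BH14line, (hnorm i).2.1])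
        rw [hW0, h1] at this
        have h2 : κ (Sum.inl ((0:ZMod p), c)) 2 * BH14dp w (B 2) = 0 := by
          linear_combination this
        rcases mul_eq_zero.mp h2 with h | h
        · exact absurd h (hκ2 _)
        · exact h
      have : (Sum.inr none : BH14Pt p) ∈ BH14line p E (.inl (i, c)) :=
        (hw _).mpr (by rw [hW0, h1, hW2]; ring)
      simpa [BH14line] using this
    -- the two affine membership equations
    have heqs := (hw (Sum.inl (x, E i x + c))).mp (by simp [BH14line])
    have heqs0 := (hw (Sum.inl (0, c))).mp (by simp [BH14line, (hnorm i).2.1])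
    have hm0 : κ (Sum.inl ((0:ZMod p), c)) 0 = 0 := by
      have := hvert 0 c
      rw [hu0] at this
      rcases div_eq_zero_iff.mp this with h | h
      · exact h
      · exact absurd h (hκ2 _)
    rw [hm0, zero_mul, zero_add] at heqs0
    -- rewrite goal in terms of coordinates
    have g1 : vf (E i x + c) =
        κ (Sum.inl (x, E i x + c)) 1 / κ (Sum.inl (x, E i x + c)) 2 := (hhor _ x).symm
    have g2 : uf x = κ (Sum.inl (x, E i x + c)) 0 / κ (Sum.inl (x, E i x + c)) 2 :=
      (hvert x (E i x + c)).symm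
    rw [g1, g2]
    have hk2 := hκ2 (x, E i x + c)
    have hm2 := hκ2 ((0:ZMod p), c)
    have hvfc : vf c = κ (Sum.inl ((0:ZMod p), c)) 1 / κ (Sum.inl ((0:ZMod p), c)) 2 := rfl
    rw [hvfc]
    field_simp
    ring_nf
    ring_nf at heqs heqs0 hrel
    -- eliminate W0, W2 using hrel and heqs0, then use heqs
    have hW0eq : BH14dp w (B 0) =
        -(κ (Sum.inr (some i)) 1 / κ (Sum.inr (some i)) 0) * BH14dp w (B 1) := by
      field_simp
      linear_combination hrel
    have hW2eq : BH14dp w (B 2) =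
        -(κ (Sum.inl ((0:ZMod p), c)) 1 / κ (Sum.inl ((0:ZMod p), c)) 2) * BH14dp w (B 1) := by
      field_simp
      linear_combination heqs0
    rw [hW0eq, hW2eq] at heqs
    field_simp at heqs
    have hZ : BH14dp w (B 1) *
        (κ (Sum.inl (x, E i x + c)) 1 * κ (Sum.inl ((0:ZMod p), c)) 2 * κ (Sum.inr (some i)) 0 -
          κ (Sum.inl ((0:ZMod p), c)) 2 * κ (Sum.inr (some i)) 1 * κ (Sum.inl (x, E i x + c)) 0 -
          κ (Sum.inr (some i)) 0 * κ (Sum.inl ((0:ZMod p), c)) 1 * κ (Sum.inl (x, E i x + c)) 2)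
        = 0 := by linear_combination heqs
    rcases mul_eq_zero.mp hZ with h | h
    · exact absurd h hW1
    · linear_combination h
  -- final arithmetic: E is multiplication
  intro i x
  by_cases hi : i = 0
  · subst hi
    rw [(hnorm x).1, zero_mul]
  obtain ⟨σi, hσi⟩ := hclass i hi
  obtain ⟨σ1, hσ1⟩ := hclass 1 one_ne_zero
  have hv_add : ∀ y c : ZMod p, vf (y + c) = vf c + σ1 * uf y := by
    intro y c
    have := hσ1 c y
    rwa [(hnorm y).2.2.1] at this
  have hvu : ∀ y : ZMod p, vf y = σ1 * uf y := by
    intro y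
    have := hv_add y 0
    rwa [add_zero, hv0, zero_add] at this
  have hadd : ∀ y c : ZMod p, vf (y + c) = vf c + vf y := by
    intro y c
    rw [hv_add y c, hvu y]
  have hnat : ∀ n : ℕ, vf (n : ZMod p) = (n : ZMod p) * vf 1 := by
    intro n
    induction n with
    | zero => simpa using hv0
    | succ n ih =>
      push_cast
      rw [hadd (n : ZMod p) 1, ih]
      ring
  have hlinv : ∀ t : ZMod p, vf t = t * vf 1 := by
    intro t
    have ht : ((t.val : ℕ) : ZMod p) = t := ZMod.natCast_rightInverse t
    rw [← ht, hnat]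
  have c1 : E i x * vf 1 = σi * uf x := by
    have h1 := hσi 0 x
    rw [add_zero, hv0, zero_add] at h1
    rw [← hlinv (E i x), h1]
  have c2 : i * vf 1 = σi * uf 1 := by
    have h1 := hσi 0 1
    rw [add_zero, hv0, zero_add, (hnorm i).2.2.2] at h1
    rw [← hlinv i, h1]
  have c3 : x * vf 1 = σ1 * uf x := by rw [← hlinv x, hvu x]
  have c4 : vf 1 = σ1 * uf 1 := hvu 1
  have key : E i x * (vf 1 * vf 1) = i * x * (vf 1 * vf 1) := by
    linear_combination (vf 1) * c1 + (σi * uf x) * c4 - (σ1 * uf x) * c2 - (i * vf 1) * c3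
  exact mul_right_cancel₀ (mul_ne_zero hv1 hv1) key

end BH14b

/-- If there is a fully normalized Butson–Hadamard matrix of type `(p,p)` which is not
the Fourier matrix, then there exists a non-Desarguesian projective plane of order `p`. -/
theorem stmt_14 (p : ℕ) [Fact p.Prime]
    (E : Matrix (ZMod p) (ZMod p) (ZMod p))
    (H : Matrix (ZMod p) (ZMod p) ℂ)
    (hH : ∀ i j, H i j = Complex.exp (2 * Real.pi * Complex.I / p) ^ (E i j).val)
    (hBH : H * H.conjTranspose = (p : ℂ) • 1)
    (hnorm : ∀ i : ZMod p, E 0 i = 0 ∧ E i 0 = 0 ∧ E 1 i = i ∧ E i 1 = i)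
    (hnF : ∃ i j : ZMod p, E i j ≠ i * j) :
    ∃ (P : Type) (Lines : Finset (Set P)),
      Nat.card P = p ^ 2 + p + 1 ∧ Lines.card = p ^ 2 + p + 1 ∧
      (∀ l ∈ Lines, l.ncard = p + 1) ∧
      (∀ l ∈ Lines, ∀ l' ∈ Lines, l ≠ l' → (l ∩ l').ncard = 1) ∧
      ¬ ∃ pt : Projectivization (ZMod p) (Fin 3 → ZMod p) → P,
          Function.Bijective pt ∧
          ∀ l : Set P, l ∈ Lines ↔
            ∃ w : Projectivization (ZMod p) (Fin 3 → ZMod p),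
              l = pt '' {v | ∑ k, w.rep k * v.rep k = 0} := by
  haveI : NeZero p := ⟨(Fact.out : p.Prime).ne_zero⟩
  classical
  refine ⟨BH14Pt p, BH14Lines p E, ?_, ?_, ?_, ?_, ?_⟩
  · rw [Nat.card_eq_fintype_card]
    rw [show Fintype.card (BH14Pt p) =
      Fintype.card (ZMod p) * Fintype.card (ZMod p) + (Fintype.card (ZMod p) + 1) by
        simp [Fintype.card_sum, Fintype.card_prod, Fintype.card_option]]
    rw [ZMod.card]
    ring
  · rw [BH14Lines]; erw [Finset.card_image_of_injective _ (BH14line_inj (fun i => (hnorm i).2.1))]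
    rw [Finset.card_univ]
    rw [show Fintype.card (BH14Idx p) =
      Fintype.card (ZMod p) * Fintype.card (ZMod p) + (Fintype.card (ZMod p) + 1) by
        simp [Fintype.card_sum, Fintype.card_prod]]
    rw [ZMod.card]
    ring
  · intro l hl
    rw [BH14Lines, Finset.mem_image] at hl
    obtain ⟨idx, -, rfl⟩ := hl
    exact BH14ncard_line idx
  · intro l hl l' hl' hne
    rw [BH14Lines, Finset.mem_image] at hl hl'
    obtain ⟨idx, -, rfl⟩ := hl
    obtain ⟨idx', -, rfl⟩ := hl'
    exact BH14inter (fun i => (hnorm i).2.1)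
      (fun i j hij => BH14diffbij p Fact.out E H hH hBH hij) idx idx' hne
  · rintro ⟨pt, hb, hl⟩
    obtain ⟨i, j, hij⟩ := hnF
    exact hij (BH14linear p E hnorm pt hb hl i j)
end
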